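/- arXiv:math-ph/0512015 — 3 statements merged into one kernel-verified Lean document; each statement's English description precedes it below -/
import Mathlib

section
/- Let d ≥ 1 and let F : [0,∞) → ℂ be a C¹ function with ‖F‖_{2d,1} := sup_{Q ≥ 0} ⟨Q⟩^{2d}(|F(Q)| + |F'(Q)|) < ∞. Then there is a constant C > 0, depending only on d, such that for every ξ ∈ ℂ with 0 < Im ξ ≤ 1/2 one has ∫₀^∞ |F'(Q)| / |ξ − Q| dQ ≤ C ‖F‖_{2d,1} · |log(Im ξ)|. -/
open MeasureTheory Complex

noncomputable section

/-- Japanese bracket `⟨Q⟩ = √(2 + Q²)`. -/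
def jb (x : ℝ) : ℝ := Real.sqrt (2 + x ^ 2)

set_option maxHeartbeats 1000000 in
theorem statement9 (d : ℕ) (hd : 1 ≤ d) :
    ∃ C > (0 : ℝ),
      ∀ F F' : ℝ → ℂ,
        (∀ Q ∈ Set.Ici (0 : ℝ), HasDerivWithinAt F (F' Q) (Set.Ici 0) Q) →
        ContinuousOn F' (Set.Ici 0) →
        ∀ CF : ℝ,
          (∀ Q : ℝ, 0 ≤ Q →
            jb Q ^ (2 * d) * (‖F Q‖ + ‖F' Q‖) ≤ CF) →
        ∀ ξ : ℂ, 0 < ξ.im → ξ.im ≤ 1 / 2 →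
          (∫ Q in Set.Ioi (0 : ℝ), ‖F' Q‖ / ‖ξ - (Q : ℂ)‖) ≤
            C * CF * |Real.log ξ.im| := by
  refine ⟨20, by norm_num, ?_⟩
  intro F F' hF hF'cont CF hCF ξ him him'
  set ε : ℝ := ξ.im with hε
  set x : ℝ := ξ.re with hx
  -- CF is nonnegative
  have hCF0 : 0 ≤ CF := by
    refine le_trans ?_ (hCF 0 le_rfl)
    have h1 : (0:ℝ) ≤ jb 0 ^ (2 * d) := by unfold jb; positivity
    positivity
  -- |log ε| facts
  have hεlt1 : ε < 1 := by linarith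
  have hlogneg : Real.log ε < 0 := Real.log_neg him hεlt1
  have habsval : |Real.log ε| = -Real.log ε := abs_of_neg hlogneg
  have hlog2le : Real.log 2 ≤ -Real.log ε := by
    have : Real.log ε ≤ Real.log (1/2) := Real.log_le_log him him'
    rw [show (1:ℝ)/2 = 2⁻¹ by norm_num, Real.log_inv] at this
    linarith
  have hlog2pos : (0.6931471803 : ℝ) < Real.log 2 := Real.log_two_gt_d9
  -- bound on |F'|
  have hF'le : ∀ Q : ℝ, 0 ≤ Q → ‖F' Q‖ ≤ CF / (1 + Q ^ 2) := by
    intro Q hQ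
    have hjb : (1 + Q ^ 2) ≤ jb Q ^ (2 * d) := by
      have h2 : jb Q ^ (2 * d) = (2 + Q ^ 2) ^ d := by
        rw [pow_mul]
        congr 1
        unfold jb
        rw [sq]
        exact Real.mul_self_sqrt (by positivity)
      rw [h2]
      calc (1 + Q ^ 2) ≤ 2 + Q ^ 2 := by linarith
        _ = (2 + Q ^ 2) ^ 1 := (pow_one _).symm
        _ ≤ (2 + Q ^ 2) ^ d := pow_le_pow_right₀ (by nlinarith) hd
    have h3 : jb Q ^ (2 * d) * ‖F' Q‖ ≤ CF := by
      refine le_trans ?_ (hCF Q hQ)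
      have := norm_nonneg (F Q)
      have h1 : (0:ℝ) ≤ jb Q ^ (2 * d) := by unfold jb; positivity
      nlinarith [norm_nonneg (F' Q)]
    rw [le_div_iff₀ (by positivity)]
    nlinarith [norm_nonneg (F' Q), hjb, h3]
  -- lower bounds for |ξ - Q|
  have habs_ge_im : ∀ Q : ℝ, ε ≤ ‖ξ - Q‖ := by
    intro Q
    have := Complex.abs_im_le_norm (ξ - Q)
    simp only [Complex.sub_im, Complex.ofReal_im, sub_zero] at this
    calc ε ≤ |ξ.im| := le_abs_self _
      _ ≤ _ := this
  have habs_ge_re : ∀ Q : ℝ, |x - Q| ≤ ‖ξ - Q‖ := by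
    intro Q
    have := Complex.abs_re_le_norm (ξ - Q)
    simpa [Complex.sub_re] using this
  have habspos : ∀ Q : ℝ, 0 < ‖ξ - Q‖ := fun Q => lt_of_lt_of_le him (habs_ge_im Q)
  -- the dominating function
  set f1 : ℝ → ℝ := fun u => 2 * CF * (1 / (x + ε - u)) with hf1
  set f2 : ℝ → ℝ := fun u => 2 * CF * (1 / (u - x + ε)) with hf2
  set g : ℝ → ℝ := fun Q => CF * (1 + Q ^ 2)⁻¹ + ((Set.Icc (x-1) x).indicator f1 Q
      + (Set.Icc x (x+1)).indicator f2 Q) with hg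
  have hind1_nonneg : ∀ Q, 0 ≤ (Set.Icc (x-1) x).indicator f1 Q := by
    intro Q
    refine Set.indicator_nonneg (fun u hu => ?_) Q
    have : 0 < x + ε - u := by rcases hu with ⟨_, h2⟩; linarith
    positivity
  have hind2_nonneg : ∀ Q, 0 ≤ (Set.Icc x (x+1)).indicator f2 Q := by
    intro Q
    refine Set.indicator_nonneg (fun u hu => ?_) Q
    have : 0 < u - x + ε := by rcases hu with ⟨h1, _⟩; linarith
    positivity
  -- pointwise bound
  have hpt : ∀ Q ∈ Set.Ioi (0:ℝ), ‖F' Q‖ / ‖ξ - Q‖ ≤ g Q := by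
    intro Q hQ
    have hQ0 : (0:ℝ) ≤ Q := le_of_lt hQ
    have hden := habspos Q
    rcases le_or_gt |x - Q| 1 with hc | hc
    · -- near case
      have hF'le' : ‖F' Q‖ ≤ CF := by
        calc ‖F' Q‖ ≤ CF / (1 + Q ^ 2) := hF'le Q hQ0
          _ ≤ CF / 1 := by apply div_le_div_of_nonneg_left hCF0 (by norm_num) <;> nlinarith
          _ = CF := div_one _
      have hq1 : ‖F' Q‖ / ‖ξ - Q‖ ≤ CF / ‖ξ - Q‖ :=
        div_le_div_of_nonneg_right hF'le' hden.le
      rcases le_total Q x with hQx | hQx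
      · -- Q ∈ Icc (x-1) x
        have hmem : Q ∈ Set.Icc (x-1) x := by
          refine ⟨?_, hQx⟩
          have : x - Q ≤ 1 := le_trans (le_abs_self _) hc
          linarith
        have hval : (Set.Icc (x-1) x).indicator f1 Q = 2 * CF * (1 / (x + ε - Q)) :=
          Set.indicator_of_mem hmem f1
        have hkey : CF / ‖ξ - Q‖ ≤ 2 * CF * (1 / (x + ε - Q)) := by
          have h1 : x - Q ≤ ‖ξ - Q‖ := le_trans (le_abs_self _) (habs_ge_re Q)
          have h2 := habs_ge_im Q
          have hd2 : 0 < x + ε - Q := by linarith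
          rw [mul_one_div, div_le_div_iff₀ hden hd2]
          nlinarith
        have h5 := hind2_nonneg Q
        have hg1 : 0 ≤ CF * (1 + Q ^ 2)⁻¹ := by positivity
        show _ ≤ CF * (1 + Q ^ 2)⁻¹ + ((Set.Icc (x-1) x).indicator f1 Q
            + (Set.Icc x (x+1)).indicator f2 Q)
        rw [hval]
        calc ‖F' Q‖ / ‖ξ - Q‖ ≤ CF / ‖ξ - Q‖ := hq1
          _ ≤ 2 * CF * (1 / (x + ε - Q)) := hkey
          _ ≤ _ := by linarith
      · -- Q ∈ Icc x (x+1)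
        have hmem : Q ∈ Set.Icc x (x+1) := by
          refine ⟨hQx, ?_⟩
          have h6 : Q - x ≤ |x - Q| := by rw [abs_sub_comm]; exact le_abs_self _
          linarith
        have hval : (Set.Icc x (x+1)).indicator f2 Q = 2 * CF * (1 / (Q - x + ε)) :=
          Set.indicator_of_mem hmem f2
        have hkey : CF / ‖ξ - Q‖ ≤ 2 * CF * (1 / (Q - x + ε)) := by
          have h1 : Q - x ≤ ‖ξ - Q‖ := by
            have h6 : Q - x ≤ |x - Q| := by rw [abs_sub_comm]; exact le_abs_self _
            exact le_trans h6 (habs_ge_re Q)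
          have h2 := habs_ge_im Q
          have hd2 : 0 < Q - x + ε := by linarith
          rw [mul_one_div, div_le_div_iff₀ hden hd2]
          nlinarith
        have h5 := hind1_nonneg Q
        have hg1 : 0 ≤ CF * (1 + Q ^ 2)⁻¹ := by positivity
        show _ ≤ CF * (1 + Q ^ 2)⁻¹ + ((Set.Icc (x-1) x).indicator f1 Q
            + (Set.Icc x (x+1)).indicator f2 Q)
        rw [hval]
        calc ‖F' Q‖ / ‖ξ - Q‖ ≤ CF / ‖ξ - Q‖ := hq1
          _ ≤ 2 * CF * (1 / (Q - x + ε)) := hkey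
          _ ≤ _ := by linarith
    · -- far case: |ξ - Q| ≥ |x - Q| > 1
      have h1 : (1:ℝ) ≤ ‖ξ - Q‖ := le_trans (le_of_lt hc) (habs_ge_re Q)
      have : ‖F' Q‖ / ‖ξ - Q‖ ≤ ‖F' Q‖ :=
        div_le_self (norm_nonneg _) h1
      have h2 := hF'le Q hQ0
      have h3 := hind1_nonneg Q
      have h4 := hind2_nonneg Q
      rw [hg]
      simp only []
      rw [div_eq_mul_inv CF] at h2
      linarith

  -- main estimate
  by_cases hint : Integrable (fun Q => ‖F' Q‖ / ‖ξ - Q‖)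
      (volume.restrict (Set.Ioi (0:ℝ)))
  · -- integrabilities of the dominating pieces
    have hg1int : Integrable (fun Q : ℝ => CF * (1 + Q ^ 2)⁻¹) volume :=
      integrable_inv_one_add_sq.const_mul CF
    have hc1 : ContinuousOn f1 (Set.Icc (x-1) x) := by
      apply ContinuousOn.mul continuousOn_const
      apply ContinuousOn.div continuousOn_const
      · fun_prop
      · intro u hu
        rcases hu with ⟨_, h2⟩
        have : 0 < x + ε - u := by linarith
        exact ne_of_gt this
    have hc2 : ContinuousOn f2 (Set.Icc x (x+1)) := by
      apply ContinuousOn.mul continuousOn_const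
      apply ContinuousOn.div continuousOn_const
      · fun_prop
      · intro u hu
        rcases hu with ⟨h1, _⟩
        have : 0 < u - x + ε := by linarith
        exact ne_of_gt this
    have hi1int : Integrable ((Set.Icc (x-1) x).indicator f1) volume :=
      (hc1.integrableOn_Icc).integrable_indicator measurableSet_Icc
    have hi2int : Integrable ((Set.Icc x (x+1)).indicator f2) volume :=
      (hc2.integrableOn_Icc).integrable_indicator measurableSet_Icc
    have hgint : Integrable g volume := by
      apply Integrable.add hg1int (Integrable.add hi1int hi2int)
    -- compare with g
    have hmono : (∫ Q in Set.Ioi (0:ℝ), ‖F' Q‖ / ‖ξ - Q‖)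
        ≤ ∫ Q in Set.Ioi (0:ℝ), g Q := by
      refine integral_mono_ae hint hgint.restrict ?_
      exact (ae_restrict_iff' measurableSet_Ioi).2 (Filter.Eventually.of_forall hpt)
    -- split the integral of g
    have hsplit : (∫ Q in Set.Ioi (0:ℝ), g Q)
        = (∫ Q in Set.Ioi (0:ℝ), CF * (1 + Q ^ 2)⁻¹)
          + ((∫ Q in Set.Ioi (0:ℝ), (Set.Icc (x-1) x).indicator f1 Q)
            + (∫ Q in Set.Ioi (0:ℝ), (Set.Icc x (x+1)).indicator f2 Q)) := by
      have hi12 : Integrable (fun Q : ℝ => (Set.Icc (x-1) x).indicator f1 Q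
          + (Set.Icc x (x+1)).indicator f2 Q) volume := hi1int.add hi2int
      simp only [hg]
      rw [integral_add hg1int.restrict hi12.restrict,
        integral_add hi1int.restrict hi2int.restrict]
    -- bound piece 1
    have hp1 : (∫ Q in Set.Ioi (0:ℝ), CF * (1 + Q ^ 2)⁻¹) ≤ CF * Real.pi := by
      rw [integral_const_mul, integral_Ioi_inv_one_add_sq, Real.arctan_zero, sub_zero]
      nlinarith [Real.pi_pos]
    -- interval integral computation
    have hlogval : (∫ t in ε..(1+ε), 1 / t) = Real.log ((1+ε)/ε) := by
      apply integral_one_div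
      intro h0
      rw [Set.mem_uIcc] at h0
      rcases h0 with ⟨h1, _⟩ | ⟨h1, _⟩ <;> linarith
    have hI1 : (∫ u in (x-1)..x, f1 u) = 2 * CF * Real.log ((1+ε)/ε) := by
      rw [hf1]
      rw [intervalIntegral.integral_const_mul]
      have := intervalIntegral.integral_comp_sub_left (a := x-1) (b := x)
        (fun t : ℝ => 1 / t) (x + ε)
      rw [this]
      rw [show x + ε - x = ε by ring, show x + ε - (x-1) = 1 + ε by ring, hlogval]
    have hI2 : (∫ u in x..(x+1), f2 u) = 2 * CF * Real.log ((1+ε)/ε) := by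
      rw [hf2]
      rw [intervalIntegral.integral_const_mul]
      have := intervalIntegral.integral_comp_add_right (a := x) (b := x+1)
        (fun t : ℝ => 1 / t) (ε - x)
      simp only [show ∀ u : ℝ, u + (ε - x) = u - x + ε by intro u; ring] at this
      rw [this]
      rw [show x - x + ε = ε by ring, show x + 1 - x + ε = 1 + ε by ring, hlogval]
    -- bound pieces 2 and 3
    have hp2 : (∫ Q in Set.Ioi (0:ℝ), (Set.Icc (x-1) x).indicator f1 Q)
        ≤ 2 * CF * Real.log ((1+ε)/ε) := by
      have h := setIntegral_le_integral (s := Set.Ioi (0:ℝ)) hi1int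
        (Filter.Eventually.of_forall hind1_nonneg)
      have e1 : (∫ Q : ℝ, (Set.Icc (x-1) x).indicator f1 Q)
          = 2 * CF * Real.log ((1+ε)/ε) := by
        rw [integral_indicator measurableSet_Icc, integral_Icc_eq_integral_Ioc,
          ← intervalIntegral.integral_of_le (by linarith : x - 1 ≤ x)]
        exact hI1
      exact h.trans (le_of_eq e1)
    have hp3 : (∫ Q in Set.Ioi (0:ℝ), (Set.Icc x (x+1)).indicator f2 Q)
        ≤ 2 * CF * Real.log ((1+ε)/ε) := by
      have h := setIntegral_le_integral (s := Set.Ioi (0:ℝ)) hi2int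
        (Filter.Eventually.of_forall hind2_nonneg)
      have e1 : (∫ Q : ℝ, (Set.Icc x (x+1)).indicator f2 Q)
          = 2 * CF * Real.log ((1+ε)/ε) := by
        rw [integral_indicator measurableSet_Icc, integral_Icc_eq_integral_Ioc,
          ← intervalIntegral.integral_of_le (by linarith : x ≤ x + 1)]
        exact hI2
      exact h.trans (le_of_eq e1)
    -- numerics
    have hlogsum : Real.log ((1+ε)/ε) ≤ 2 * |Real.log ε| := by
      rw [Real.log_div (by linarith) (ne_of_gt him), habsval]
      have h1 : Real.log (1+ε) ≤ Real.log 2 := by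
        apply Real.log_le_log (by linarith)
        linarith
      linarith
    have hpi : Real.pi ≤ 4 := Real.pi_le_four
    have hCFpi : CF * Real.pi ≤ 6 * CF * |Real.log ε| := by
      rw [habsval]
      nlinarith [mul_le_mul_of_nonneg_left hlog2le hCF0,
        mul_le_mul_of_nonneg_left hpi hCF0]
    rw [habsval] at hlogsum hCFpi ⊢
    calc (∫ Q in Set.Ioi (0:ℝ), ‖F' Q‖ / ‖ξ - Q‖)
        ≤ ∫ Q in Set.Ioi (0:ℝ), g Q := hmono
      _ = _ := hsplit
      _ ≤ CF * Real.pi + (2 * CF * Real.log ((1+ε)/ε) + 2 * CF * Real.log ((1+ε)/ε)) := by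
          linarith
      _ ≤ 20 * CF * -Real.log ε := by nlinarith
  · rw [integral_undef hint]
    positivity
end
end

section
/- Let d ≥ 3. There is a constant C > 0, depending only on d, such that for every measurable h : ℝ^d → ℂ with ‖h‖_{2d,0} < ∞, every s > 0 and every q ∈ ℝ^d one has (2s)^{−1/2} ∫_{{p : |p| = √(2s)}} |h(p − q)| dσ(p) ≤ C ‖h‖_{2d,0} · √s / ( ⟨s⟩ ⟨ |q| − √(2s) ⟩ ), where σ denotes the (d−1)-dimensional surface measure on the sphere of radius √(2s) in ℝ^d. -/
open MeasureTheory Complex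
open Module
open scoped ENNReal NNReal

set_option maxHeartbeats 1000000

noncomputable section

/-- volume of unit ball under Hausdorff measure -/
def sV (m : ℕ) : ℝ≥0∞ := μH[(m:ℝ)] (Metric.ball (0 : EuclideanSpace ℝ (Fin m)) 1)

lemma haar_inst (m : ℕ) : (μH[(m:ℝ)] : Measure (EuclideanSpace ℝ (Fin m))).IsAddHaarMeasure := by
  have h : ((m:ℝ)) = ((Module.finrank ℝ (EuclideanSpace ℝ (Fin m)) : ℕ) : ℝ) := by simp
  rw [h]; infer_instance

lemma cball_meas (m : ℕ) {ρ : ℝ} (hρ : 0 ≤ ρ) :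
    μH[(m:ℝ)] (Metric.closedBall (0 : EuclideanSpace ℝ (Fin m)) ρ)
      = ENNReal.ofReal (ρ ^ m) * sV m := by
  haveI := haar_inst m
  rw [Measure.addHaar_closedBall _ _ hρ, finrank_euclideanSpace_fin]
  rfl

lemma sV_lt_top (m : ℕ) : sV m < ⊤ := by
  haveI := haar_inst m
  exact lt_of_le_of_lt (measure_mono Metric.ball_subset_closedBall)
    (isCompact_closedBall _ _).measure_lt_top

lemma cap_bound (d : ℕ) (hd : 3 ≤ d) (u : EuclideanSpace ℝ (Fin d)) (hu : ‖u‖ = 1)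
    {c r : ℝ} (hc : 0 < c) (hcr : c ≤ r) :
    μH[(d:ℝ)-1] {p : EuclideanSpace ℝ (Fin d) | ‖p‖ = r ∧ c ≤ (inner ℝ p u : ℝ)} ≤
      ENNReal.ofReal ((r / c * Real.sqrt (r^2 - c^2)) ^ (d-1)) * sV (d-1) := by
  have hr : 0 < r := lt_of_lt_of_le hc hcr
  have hsub : (0:ℝ) ≤ r^2 - c^2 := by nlinarith
  set ρ := Real.sqrt (r^2 - c^2) with hρdef
  have hρ : 0 ≤ ρ := Real.sqrt_nonneg _
  have hρ2 : ρ^2 = r^2 - c^2 := Real.sq_sqrt hsub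
  set W := (Submodule.span ℝ {u})ᗮ with hW
  set D : Set (EuclideanSpace ℝ (Fin d)) := {y | y ∈ W ∧ ‖y‖ ≤ ρ} with hD
  set f : EuclideanSpace ℝ (Fin d) → ℝ := fun y => Real.sqrt (r^2 - ‖y‖^2) with hf
  set Φ : EuclideanSpace ℝ (Fin d) → EuclideanSpace ℝ (Fin d) := fun y => y + f y • u with hΦ
  -- basic facts about f on D
  have hfD : ∀ y ∈ D, c ≤ f y ∧ f y ≤ r := by
    intro y hy
    have h1 : ‖y‖^2 ≤ ρ^2 := by
      have := hy.2
      nlinarith [norm_nonneg y]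
    constructor
    · have : c^2 ≤ r^2 - ‖y‖^2 := by nlinarith
      calc c = Real.sqrt (c^2) := (Real.sqrt_sq hc.le).symm
        _ ≤ f y := Real.sqrt_le_sqrt this
    · calc f y ≤ Real.sqrt (r^2) := Real.sqrt_le_sqrt (by nlinarith [sq_nonneg ‖y‖])
        _ = r := Real.sqrt_sq hr.le
  -- cap is contained in the image of D
  have hsubset : {p : EuclideanSpace ℝ (Fin d) | ‖p‖ = r ∧ c ≤ (inner ℝ p u : ℝ)} ⊆ Φ '' D := by
    rintro p ⟨hpr, hpc⟩
    set a : ℝ := inner ℝ p u with ha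
    have hau : a ≤ r := by
      calc a ≤ ‖p‖ * ‖u‖ := real_inner_le_norm p u
        _ = r := by rw [hpr, hu, mul_one]
    have ha0 : 0 < a := lt_of_lt_of_le hc hpc
    refine ⟨p - a • u, ⟨?_, ?_⟩, ?_⟩
    · rw [hW, Submodule.mem_orthogonal_singleton_iff_inner_right]
      rw [inner_sub_right, real_inner_smul_right, real_inner_self_eq_norm_sq, hu]
      rw [real_inner_comm]
      simp [← ha]
    · have hnorm : ‖p - a • u‖^2 = r^2 - a^2 := by
        rw [norm_sub_sq_real, real_inner_smul_right, norm_smul, hu, hpr]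
        simp [← ha, _root_.abs_of_pos ha0]
        ring
      have : ‖p - a • u‖^2 ≤ ρ^2 := by nlinarith
      nlinarith [norm_nonneg (p - a • u)]
    · have hnorm : ‖p - a • u‖^2 = r^2 - a^2 := by
        rw [norm_sub_sq_real, real_inner_smul_right, norm_smul, hu, hpr]
        simp [← ha, _root_.abs_of_pos ha0]
        ring
      have : f (p - a • u) = a := by
        rw [hf]
        simp only [hnorm]
        rw [show r^2 - (r^2 - a^2) = a^2 by ring, Real.sqrt_sq ha0.le]
      rw [hΦ]
      simp only [this]
      abel
  -- Lipschitz estimate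
  have horth : ∀ y ∈ D, (inner ℝ y u : ℝ) = 0 := by
    intro y hy
    have := hy.1
    rw [hW, Submodule.mem_orthogonal_singleton_iff_inner_right] at this
    rw [real_inner_comm]; exact this
  have hlip : LipschitzOnWith (r/c).toNNReal Φ D := by
    apply LipschitzOnWith.of_dist_le_mul
    intro y hy y' hy'
    have hfy := hfD y hy
    have hfy' := hfD y' hy'
    have hval : (r/c).toNNReal = (r/c : ℝ).toNNReal := rfl
    have hcoe : ((r/c).toNNReal : ℝ) = r/c := Real.coe_toNNReal _ (by positivity)
    rw [hcoe]
    have harg : ∀ z ∈ D, (0:ℝ) ≤ r^2 - ‖z‖^2 := by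
      intro z hz
      nlinarith [hz.2, hρ2, norm_nonneg z, sq_nonneg c,
        mul_self_le_mul_self (norm_nonneg z) hz.2]
    have hsq1 : f y ^ 2 = r^2 - ‖y‖^2 := Real.sq_sqrt (harg y hy)
    have hsq2 : f y' ^ 2 = r^2 - ‖y'‖^2 := Real.sq_sqrt (harg y' hy')
    -- difference of f values
    have hkey : (f y - f y') * (f y + f y') = ‖y'‖^2 - ‖y‖^2 := by linear_combination hsq1 - hsq2
    have hsumf : 2*c ≤ f y + f y' := by linarith [hfy.1, hfy'.1]
    have hnorms : |‖y‖^2 - ‖y'‖^2| ≤ 2 * ρ * ‖y - y'‖ := by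
      have h1 : |‖y‖ - ‖y'‖| ≤ ‖y - y'‖ := abs_norm_sub_norm_le y y'
      have h2 : ‖y‖ + ‖y'‖ ≤ 2 * ρ := by linarith [hy.2, hy'.2]
      have : ‖y‖^2 - ‖y'‖^2 = (‖y‖ - ‖y'‖) * (‖y‖ + ‖y'‖) := by ring
      rw [this, _root_.abs_mul, _root_.abs_of_nonneg (by positivity : (0:ℝ) ≤ ‖y‖ + ‖y'‖)]
      calc |‖y‖ - ‖y'‖| * (‖y‖ + ‖y'‖) ≤ ‖y - y'‖ * (2 * ρ) :=
            mul_le_mul h1 h2 (by positivity) (norm_nonneg _)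
        _ = 2 * ρ * ‖y - y'‖ := by ring
    have hdf : |f y - f y'| ≤ (ρ / c) * ‖y - y'‖ := by
      rcases le_or_gt (f y) (f y') with hle | hlt
      · rw [_root_.abs_of_nonpos (by linarith)]
        rw [_root_.abs_le] at hnorms
        have h3 : (f y' - f y) * (2*c) ≤ (f y' - f y) * (f y + f y') := by
          apply mul_le_mul_of_nonneg_left hsumf (by linarith)
        have h4 : (f y' - f y) * (f y + f y') = ‖y‖^2 - ‖y'‖^2 := by linear_combination -hkey
        rw [div_mul_eq_mul_div, le_div_iff₀ hc]
        nlinarith [hnorms.2]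
      · rw [_root_.abs_of_pos (by linarith)]
        rw [_root_.abs_le] at hnorms
        have h3 : (f y - f y') * (2*c) ≤ (f y - f y') * (f y + f y') := by
          apply mul_le_mul_of_nonneg_left hsumf (by linarith)
        rw [div_mul_eq_mul_div, le_div_iff₀ hc]
        nlinarith [hnorms.1]
    -- orthogonal decomposition of the distance
    have hinner : (inner ℝ (y - y') u : ℝ) = 0 := by
      rw [inner_sub_left, horth y hy, horth y' hy']; ring
    have hdist2 : dist (Φ y) (Φ y') ^ 2 = ‖y - y'‖^2 + (f y - f y')^2 := by
      rw [dist_eq_norm]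
      have heq : Φ y - Φ y' = (y - y') + (f y - f y') • u := by
        rw [hΦ]; simp only [sub_smul]; abel
      rw [heq, norm_add_sq_real, real_inner_smul_right, hinner, norm_smul, hu]
      rw [Real.norm_eq_abs]
      ring_nf
      rw [_root_.sq_abs]
      ring
    have hρc : ρ^2 + c^2 = r^2 := by linarith [hρ2]
    have hgoal2 : dist (Φ y) (Φ y') ^ 2 ≤ (r/c * dist y y')^2 := by
      rw [hdist2, dist_eq_norm]
      have h5 : (f y - f y')^2 ≤ (ρ/c)^2 * ‖y - y'‖^2 := by
        have := sq_le_sq' (by linarith [_root_.abs_le.1 hdf]) (_root_.abs_le.1 hdf).2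
        calc (f y - f y')^2 ≤ ((ρ/c) * ‖y - y'‖)^2 := by
              nlinarith [_root_.abs_nonneg (f y - f y'), _root_.sq_abs (f y - f y'), hdf,
                mul_self_le_mul_self (_root_.abs_nonneg (f y - f y')) hdf]
          _ = (ρ/c)^2 * ‖y - y'‖^2 := by ring
      have hle1 : 1 + (ρ/c)^2 = (r/c)^2 := by
        field_simp
        linarith [hρc]
      nlinarith [h5, sq_nonneg ‖y - y'‖]
    nlinarith [hgoal2, dist_nonneg (x := Φ y) (y := Φ y'), dist_nonneg (x := y) (y := y'),
      mul_nonneg (by positivity : (0:ℝ) ≤ r/c) (dist_nonneg (x := y) (y := y'))]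
  -- rank of the orthogonal complement
  have hu0 : u ≠ 0 := by intro h; rw [h, norm_zero] at hu; norm_num at hu
  have hrank : finrank ℝ W = d - 1 := by
    have h1 := Submodule.finrank_add_finrank_orthogonal
      (Submodule.span ℝ {u} : Submodule ℝ (EuclideanSpace ℝ (Fin d)))
    rw [finrank_span_singleton hu0, finrank_euclideanSpace_fin] at h1
    rw [hW]
    omega
  set B := (stdOrthonormalBasis ℝ W).reindex (finCongr hrank) with hB
  set ψ : EuclideanSpace ℝ (Fin (d-1)) →ₗᵢ[ℝ] EuclideanSpace ℝ (Fin d) :=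
    W.subtypeₗᵢ.comp B.repr.symm.toLinearIsometry with hψ
  have hDeq : D = ψ '' (Metric.closedBall 0 ρ) := by
    ext y
    constructor
    · rintro ⟨hyW, hyρ⟩
      refine ⟨B.repr ⟨y, hyW⟩, ?_, ?_⟩
      · rw [Metric.mem_closedBall, dist_zero_right, B.repr.norm_map]
        exact hyρ
      · simp [hψ]
    · rintro ⟨x, hx, rfl⟩
      rw [Metric.mem_closedBall, dist_zero_right] at hx
      refine ⟨?_, ?_⟩
      · exact (B.repr.symm x).2
      · rw [show ‖ψ x‖ = ‖x‖ from ψ.norm_map x]; exact hx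
  have hd1 : ((d:ℝ) - 1) = ((d-1 : ℕ) : ℝ) := by
    push_cast [Nat.cast_sub (by omega : 1 ≤ d)]
    ring
  have h0d : (0:ℝ) ≤ (d:ℝ) - 1 := by
    have : (3:ℝ) ≤ d := by exact_mod_cast hd
    linarith
  have hmD : μH[(d:ℝ)-1] D = ENNReal.ofReal (ρ ^ (d-1)) * sV (d-1) := by
    rw [hDeq, ψ.isometry.hausdorffMeasure_image (Or.inl h0d), hd1, cball_meas _ hρ]
  calc μH[(d:ℝ)-1] {p : EuclideanSpace ℝ (Fin d) | ‖p‖ = r ∧ c ≤ (inner ℝ p u : ℝ)}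
      ≤ μH[(d:ℝ)-1] (Φ '' D) := measure_mono hsubset
    _ ≤ (↑(r/c).toNNReal : ℝ≥0∞) ^ ((d:ℝ)-1) * μH[(d:ℝ)-1] D :=
        hlip.hausdorffMeasure_image_le h0d
    _ = ENNReal.ofReal ((r / c * ρ)^(d-1)) * sV (d-1) := by
        rw [hmD, hd1, ENNReal.rpow_natCast, ← mul_assoc]
        congr 1
        rw [show ((r/c).toNNReal : ℝ≥0∞) = ENNReal.ofReal (r/c) from rfl,
          ← ENNReal.ofReal_pow (by positivity), ← ENNReal.ofReal_mul (by positivity), ← mul_pow]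

lemma sphere_cap_bound (d : ℕ) (hd : 3 ≤ d) :
    ∃ A : ℝ, 0 < A ∧ ∀ (r t : ℝ) (q : EuclideanSpace ℝ (Fin d)), 0 < r → 0 < t →
      μH[(d:ℝ)-1] (Metric.sphere (0 : EuclideanSpace ℝ (Fin d)) r ∩ Metric.closedBall q t) ≤
        ENNReal.ofReal (A * min t r ^ (d-1)) := by
  set V₀ : ℝ := (sV (d-1)).toReal + 1 with hV₀
  have hV₀pos : 0 < V₀ := by positivity
  have hsV : sV (d-1) ≤ ENNReal.ofReal V₀ := by
    rw [hV₀]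
    calc sV (d-1) = ENNReal.ofReal ((sV (d-1)).toReal) := (ENNReal.ofReal_toReal (sV_lt_top _).ne).symm
      _ ≤ _ := by
          apply ENNReal.ofReal_le_ofReal
          linarith
  have hd0 : 0 < d := by omega
  have hsd1 : (1:ℝ) ≤ Real.sqrt d := by
    rw [show (1:ℝ) = Real.sqrt 1 by simp]
    exact Real.sqrt_le_sqrt (by exact_mod_cast hd0)
  have hsd0 : (0:ℝ) < Real.sqrt d := by linarith
  refine ⟨(2*d) * V₀ * (5 * Real.sqrt d)^(d-1), by positivity, ?_⟩
  intro r t q hr ht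
  -- whole-sphere bound
  have hsphere : μH[(d:ℝ)-1] (Metric.sphere (0 : EuclideanSpace ℝ (Fin d)) r) ≤
      ENNReal.ofReal ((2*d) * V₀ * (Real.sqrt d * r)^(d-1)) := by
    have hc₀ : (0:ℝ) < r / Real.sqrt d := by positivity
    have hc₀r : r / Real.sqrt d ≤ r := by
      rw [div_le_iff₀ hsd0]
      nlinarith
    set u : Fin d → Bool → EuclideanSpace ℝ (Fin d) :=
      fun i b => (if b then (1:ℝ) else -1) • EuclideanSpace.single i (1:ℝ) with hudef
    have hunorm : ∀ i b, ‖u i b‖ = 1 := by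
      intro i b
      rw [hudef]
      cases b <;> simp [norm_smul, EuclideanSpace.norm_single]
    have hcover : Metric.sphere (0 : EuclideanSpace ℝ (Fin d)) r ⊆
        ⋃ ib : Fin d × Bool, {p : EuclideanSpace ℝ (Fin d) |
          ‖p‖ = r ∧ r / Real.sqrt d ≤ (inner ℝ p (u ib.1 ib.2) : ℝ)} := by
      intro p hp
      have hpr : ‖p‖ = r := by
        rw [Metric.mem_sphere, dist_zero_right] at hp
        exact hp
      haveI : Nonempty (Fin d) := Fin.pos_iff_nonempty.mp hd0
      have hnorm2 : ∑ i, (p i)^2 = r^2 := by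
        have h1 : ‖p‖ = Real.sqrt (∑ i, ‖p i‖^2) := EuclideanSpace.norm_eq p
        have h2 : ∑ i, ‖p i‖^2 = ∑ i, (p i)^2 := by
          congr 1; ext i; rw [Real.norm_eq_abs, _root_.sq_abs]
        rw [h2] at h1
        rw [← h1.symm.trans hpr]
        rw [Real.sq_sqrt (by positivity)]
      have hex : ∃ i, r^2/d ≤ (p i)^2 := by
        by_contra hcon
        push_neg at hcon
        have := Finset.sum_lt_sum_of_nonempty (Finset.univ_nonempty) (fun i _ => hcon i)
        rw [hnorm2, Finset.sum_const, Finset.card_univ, Fintype.card_fin, nsmul_eq_mul] at this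
        rw [mul_div_cancel₀ _ (by exact_mod_cast hd0.ne' : (d:ℝ) ≠ 0)] at this
        exact lt_irrefl _ this
      obtain ⟨i, hi⟩ := hex
      have habs : r / Real.sqrt d ≤ |p i| := by
        have h1 : (r / Real.sqrt d)^2 = r^2/d := by
          rw [div_pow, Real.sq_sqrt (by positivity : (0:ℝ) ≤ (d:ℝ))]
        calc r / Real.sqrt d = Real.sqrt ((r / Real.sqrt d)^2) := (Real.sqrt_sq hc₀.le).symm
          _ ≤ Real.sqrt ((p i)^2) := Real.sqrt_le_sqrt (by rw [h1]; exact hi)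
          _ = |p i| := Real.sqrt_sq_eq_abs _
      have hinner : ∀ b, (inner ℝ p (u i b) : ℝ) = (if b then (1:ℝ) else -1) * (p i) := by
        intro b
        rw [hudef]
        simp only [real_inner_smul_right]
        congr 1
        rw [EuclideanSpace.inner_single_right]
        simp
      rcases le_or_gt 0 (p i) with hpi | hpi
      · refine Set.mem_iUnion.mpr ⟨⟨i, true⟩, hpr, ?_⟩
        rw [hinner true]
        rw [_root_.abs_of_nonneg hpi] at habs
        simpa using habs
      · refine Set.mem_iUnion.mpr ⟨⟨i, false⟩, hpr, ?_⟩
        rw [hinner false]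
        rw [_root_.abs_of_neg hpi] at habs
        simpa using habs
    calc μH[(d:ℝ)-1] (Metric.sphere (0 : EuclideanSpace ℝ (Fin d)) r)
        ≤ ∑' ib : Fin d × Bool, μH[(d:ℝ)-1] {p : EuclideanSpace ℝ (Fin d) |
            ‖p‖ = r ∧ r / Real.sqrt d ≤ (inner ℝ p (u ib.1 ib.2) : ℝ)} :=
          le_trans (measure_mono hcover) (measure_iUnion_le _)
      _ ≤ ∑' _ : Fin d × Bool, ENNReal.ofReal ((Real.sqrt d * r)^(d-1)) * ENNReal.ofReal V₀ := by
          apply ENNReal.tsum_le_tsum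
          intro ib
          calc μH[(d:ℝ)-1] {p : EuclideanSpace ℝ (Fin d) |
                ‖p‖ = r ∧ r / Real.sqrt d ≤ (inner ℝ p (u ib.1 ib.2) : ℝ)}
              ≤ ENNReal.ofReal ((r / (r / Real.sqrt d) *
                  Real.sqrt (r^2 - (r / Real.sqrt d)^2))^(d-1)) * sV (d-1) :=
                cap_bound d hd (u ib.1 ib.2) (hunorm ib.1 ib.2) hc₀ hc₀r
            _ ≤ ENNReal.ofReal ((Real.sqrt d * r)^(d-1)) * ENNReal.ofReal V₀ := by
                apply mul_le_mul' _ hsV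
                apply ENNReal.ofReal_le_ofReal
                apply pow_le_pow_left₀ (by positivity)
                have h1 : r / (r / Real.sqrt d) = Real.sqrt d := by
                  field_simp
                have h2 : Real.sqrt (r^2 - (r / Real.sqrt d)^2) ≤ r := by
                  calc Real.sqrt (r^2 - (r / Real.sqrt d)^2) ≤ Real.sqrt (r^2) :=
                        Real.sqrt_le_sqrt (by nlinarith)
                    _ = r := Real.sqrt_sq hr.le
                rw [h1]
                exact mul_le_mul_of_nonneg_left h2 hsd0.le
      _ = ((d*2 : ℕ) : ℝ≥0∞) * (ENNReal.ofReal ((Real.sqrt d * r)^(d-1)) * ENNReal.ofReal V₀) := by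
          rw [tsum_fintype, Finset.sum_const, Finset.card_univ]
          simp [Fintype.card_prod, nsmul_eq_mul]
      _ ≤ ENNReal.ofReal ((2*d) * V₀ * (Real.sqrt d * r)^(d-1)) := by
          rw [← ENNReal.ofReal_natCast, ← ENNReal.ofReal_mul (by positivity),
            ← ENNReal.ofReal_mul (by positivity)]
          apply ENNReal.ofReal_le_ofReal
          push_cast
          ring_nf
          apply le_of_eq
          ring
  rcases le_or_gt t (r/2) with hcase | hcase
  · -- small ball: genuine cap estimate
    by_cases hne : (Metric.sphere (0 : EuclideanSpace ℝ (Fin d)) r ∩ Metric.closedBall q t).Nonempty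
    swap
    · rw [Set.not_nonempty_iff_eq_empty] at hne
      rw [hne, measure_empty]
      exact zero_le
    obtain ⟨p₀, hp₀s, hp₀b⟩ := hne
    have hp₀r : ‖p₀‖ = r := by rwa [Metric.mem_sphere, dist_zero_right] at hp₀s
    have hp₀q : ‖p₀ - q‖ ≤ t := by rwa [Metric.mem_closedBall, dist_eq_norm] at hp₀b
    set a : ℝ := ‖q‖ with hadef
    have hra : |r - a| ≤ t := by
      calc |r - a| = |‖p₀‖ - ‖q‖| := by rw [hp₀r]
        _ ≤ ‖p₀ - q‖ := abs_norm_sub_norm_le _ _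
        _ ≤ t := hp₀q
    have hra' := _root_.abs_le.mp hra
    have ha1 : r/2 ≤ a := by linarith
    have ha2 : a ≤ 3*r/2 := by linarith
    have ha0 : 0 < a := by linarith
    set c : ℝ := (r^2 + a^2 - t^2)/(2*a) with hcdef
    have hta : t ≤ a := by linarith
    have hN : c * (2*a) = r^2 + a^2 - t^2 := by
      rw [hcdef]; field_simp
    have hc0 : 0 < c := by
      rw [hcdef]
      apply div_pos _ (by linarith)
      nlinarith
    have hcr : c ≤ r := by
      rw [hcdef, div_le_iff₀ (by linarith)]
      nlinarith [_root_.sq_abs (r - a), _root_.abs_nonneg (r - a), mul_self_le_mul_self (_root_.abs_nonneg (r-a)) hra]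
    have hc3 : r ≤ 3 * c := by
      have h2ac : r^2 ≤ c * (2*a) := by rw [hN]; nlinarith
      nlinarith
    have hρt : Real.sqrt (r^2 - c^2) ≤ 3*t/2 := by
      have hkey : 4*a^2*(r^2 - c^2) ≤ 9*a^2*t^2 := by
        have hfact : 4*a^2*r^2 - (c*(2*a))^2 = (t^2 - (r-a)^2)*((r+a)^2 - t^2) := by
          rw [hN]; ring
        have hf1 : 0 ≤ t^2 - (r-a)^2 := by
          nlinarith [mul_self_le_mul_self (_root_.abs_nonneg (r-a)) hra, _root_.sq_abs (r-a)]
        have hf2 : t^2 - (r-a)^2 ≤ t^2 := by nlinarith [sq_nonneg (r-a)]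
        have hf3 : (r+a)^2 - t^2 ≤ 9*a^2 := by nlinarith
        have hprod : (t^2 - (r-a)^2)*((r+a)^2 - t^2) ≤ t^2*(9*a^2) := by
          rcases le_or_gt ((r+a)^2 - t^2) 0 with hcs | hcs
          · have h0 : (t^2 - (r-a)^2)*((r+a)^2 - t^2) ≤ 0 := mul_nonpos_of_nonneg_of_nonpos hf1 hcs
            nlinarith [sq_nonneg t, sq_nonneg a]
          · exact mul_le_mul hf2 hf3 hcs.le (sq_nonneg t)
        nlinarith [hfact, hprod]
      have h1 : r^2 - c^2 ≤ (3*t/2)^2 := by nlinarith [hkey, mul_pos ha0 ha0]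
      calc Real.sqrt (r^2 - c^2) ≤ Real.sqrt ((3*t/2)^2) := Real.sqrt_le_sqrt h1
        _ = 3*t/2 := Real.sqrt_sq (by linarith)
    have hsub : Metric.sphere (0 : EuclideanSpace ℝ (Fin d)) r ∩ Metric.closedBall q t ⊆
        {p : EuclideanSpace ℝ (Fin d) | ‖p‖ = r ∧ c ≤ (inner ℝ p (a⁻¹ • q) : ℝ)} := by
      rintro p ⟨hps, hpb⟩
      have hpr : ‖p‖ = r := by rwa [Metric.mem_sphere, dist_zero_right] at hps
      have hpq : ‖p - q‖ ≤ t := by rwa [Metric.mem_closedBall, dist_eq_norm] at hpb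
      refine ⟨hpr, ?_⟩
      rw [real_inner_smul_right]
      have hip : (inner ℝ p q : ℝ) = (r^2 + a^2 - ‖p - q‖^2)/2 := by
        have := norm_sub_sq_real p q
        rw [hpr, ← hadef] at this
        linarith
      rw [hip, hcdef]
      rw [inv_mul_eq_div, div_le_div_iff₀ (by linarith) (by linarith)]
      nlinarith [norm_nonneg (p - q), mul_self_le_mul_self (norm_nonneg (p-q)) hpq]
    have hucap : ‖a⁻¹ • q‖ = 1 := by
      rw [norm_smul, Real.norm_eq_abs, _root_.abs_of_pos (by positivity), ← hadef]
      field_simp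
    calc μH[(d:ℝ)-1] (Metric.sphere (0 : EuclideanSpace ℝ (Fin d)) r ∩ Metric.closedBall q t)
        ≤ μH[(d:ℝ)-1] {p : EuclideanSpace ℝ (Fin d) | ‖p‖ = r ∧ c ≤ (inner ℝ p (a⁻¹ • q) : ℝ)} :=
          measure_mono hsub
      _ ≤ ENNReal.ofReal ((r / c * Real.sqrt (r^2 - c^2))^(d-1)) * sV (d-1) :=
          cap_bound d hd _ hucap hc0 hcr
      _ ≤ ENNReal.ofReal ((5*t)^(d-1)) * ENNReal.ofReal V₀ := by
          apply mul_le_mul' _ hsV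
          apply ENNReal.ofReal_le_ofReal
          apply pow_le_pow_left₀ (by positivity)
          have h1 : r / c ≤ 3 := by rw [div_le_iff₀ hc0]; linarith
          calc r / c * Real.sqrt (r^2 - c^2) ≤ 3 * (3*t/2) := by
                apply mul_le_mul h1 hρt (Real.sqrt_nonneg _) (by norm_num)
            _ ≤ 5*t := by linarith
      _ ≤ ENNReal.ofReal ((2*d) * V₀ * (5 * Real.sqrt d)^(d-1) * min t r ^ (d-1)) := by
          rw [← ENNReal.ofReal_mul (by positivity)]
          apply ENNReal.ofReal_le_ofReal
          have hmin : min t r = t := min_eq_left (by linarith)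
          rw [hmin]
          have h2d : (1:ℝ) ≤ 2*d := by
            have : (3:ℝ) ≤ d := by exact_mod_cast hd
            linarith
          have hV1 : (1:ℝ) ≤ V₀ := by
            rw [hV₀]
            have := ENNReal.toReal_nonneg (a := sV (d-1))
            linarith
          have h5 : (5*t)^(d-1) ≤ (5*Real.sqrt d)^(d-1) * t^(d-1) := by
            rw [← mul_pow]
            apply pow_le_pow_left₀ (by positivity)
            nlinarith
          calc (5*t)^(d-1) * V₀ ≤ ((5*Real.sqrt d)^(d-1) * t^(d-1)) * V₀ :=
                mul_le_mul_of_nonneg_right h5 hV₀pos.le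
            _ ≤ (2*(d:ℝ)) * ((5*Real.sqrt d)^(d-1) * t^(d-1) * V₀) := by
                rw [mul_assoc]
                exact le_mul_of_one_le_left (by positivity) h2d
            _ = (2*d) * V₀ * (5 * Real.sqrt d)^(d-1) * t ^ (d-1) := by ring
  · -- large ball: whole sphere
    calc μH[(d:ℝ)-1] (Metric.sphere (0 : EuclideanSpace ℝ (Fin d)) r ∩ Metric.closedBall q t)
        ≤ μH[(d:ℝ)-1] (Metric.sphere (0 : EuclideanSpace ℝ (Fin d)) r) :=
          measure_mono Set.inter_subset_left
      _ ≤ ENNReal.ofReal ((2*d) * V₀ * (Real.sqrt d * r)^(d-1)) := hsphere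
      _ ≤ ENNReal.ofReal ((2*d) * V₀ * (5 * Real.sqrt d)^(d-1) * min t r ^ (d-1)) := by
          apply ENNReal.ofReal_le_ofReal
          have hrmin : r ≤ 2 * min t r := by
            rcases min_cases t r with ⟨h1, h2⟩ | ⟨h1, h2⟩ <;> rw [h1] <;> linarith
          have hminpos : 0 < min t r := lt_min ht hr
          have h1 : (Real.sqrt d * r)^(d-1) ≤ (5 * Real.sqrt d)^(d-1) * min t r ^ (d-1) := by
            rw [← mul_pow]
            apply pow_le_pow_left₀ (by positivity)
            nlinarith [mul_le_mul_of_nonneg_left hrmin hsd0.le, mul_pos hsd0 hminpos]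
          calc (2*(d:ℝ)) * V₀ * (Real.sqrt d * r)^(d-1)
              ≤ (2*(d:ℝ)) * V₀ * ((5 * Real.sqrt d)^(d-1) * min t r ^ (d-1)) :=
                mul_le_mul_of_nonneg_left h1 (by positivity)
            _ = (2*d) * V₀ * (5 * Real.sqrt d)^(d-1) * min t r ^ (d-1) := by ring


lemma jb_pos (x : ℝ) : 0 < jb x := Real.sqrt_pos.mpr (by positivity)

lemma jb_sq (x : ℝ) : jb x ^ 2 = 2 + x ^ 2 := Real.sq_sqrt (by positivity)

lemma abs_le_jb (x : ℝ) : |x| ≤ jb x := by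
  rw [jb, show |x| = Real.sqrt (x^2) from (Real.sqrt_sq_eq_abs x).symm]
  exact Real.sqrt_le_sqrt (by nlinarith)

lemma one_le_jb (x : ℝ) : 1 ≤ jb x := by
  rw [jb, show (1:ℝ) = Real.sqrt 1 by simp]
  exact Real.sqrt_le_sqrt (by nlinarith [sq_nonneg x])

lemma jb_le (x y : ℝ) (hy : 0 ≤ y) (h : 2 + x^2 ≤ y^2) : jb x ≤ y := by
  rw [jb, show y = Real.sqrt (y^2) from (Real.sqrt_sq hy).symm]
  exact Real.sqrt_le_sqrt h

lemma lint_bound (d : ℕ) (hd : 3 ≤ d) :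
    ∃ A₁ : ℝ, 0 < A₁ ∧ ∀ (r : ℝ) (q : EuclideanSpace ℝ (Fin d)), 0 < r →
      ∫⁻ p in Metric.sphere (0 : EuclideanSpace ℝ (Fin d)) r,
        (ENNReal.ofReal (jb ‖p - q‖ ^ (2*d)))⁻¹ ∂(μH[(d:ℝ)-1]) ≤
      ENNReal.ofReal (A₁ * min 1 r ^ 2 / max 1 |‖q‖ - r|) := by
  obtain ⟨A, hApos, hA⟩ := sphere_cap_bound d hd
  refine ⟨A * 2^d * 2, by positivity, ?_⟩
  intro r q hr
  set S := Metric.sphere (0 : EuclideanSpace ℝ (Fin d)) r with hS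
  set T : ℝ := max 1 |‖q‖ - r| with hT
  have hT1 : (1:ℝ) ≤ T := le_max_left _ _
  have hT0 : (0:ℝ) < T := by linarith
  set m : ℝ := min 1 r with hm
  have hm0 : 0 < m := lt_min one_pos hr
  have hm1 : m ≤ 1 := min_le_left _ _
  set g : EuclideanSpace ℝ (Fin d) → ℝ≥0∞ :=
    fun p => (ENNReal.ofReal (jb ‖p - q‖ ^ (2*d)))⁻¹ with hg
  set Ak : ℕ → Set (EuclideanSpace ℝ (Fin d)) := fun k =>
    S ∩ Metric.closedBall q (2^(k+1) * T) ∩ {p | 2^k * T ≤ jb (dist p q)} with hAk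
  -- coverage
  have hcover : S ⊆ ⋃ k, Ak k := by
    intro p hp
    have hpr : ‖p‖ = r := by rwa [Metric.mem_sphere, dist_zero_right] at hp
    have hx0 : 0 ≤ dist p q := dist_nonneg
    have hxd : |‖q‖ - r| ≤ dist p q := by
      rw [dist_comm, dist_eq_norm]
      calc |‖q‖ - r| = |‖q‖ - ‖p‖| := by rw [hpr]
        _ ≤ ‖q - p‖ := abs_norm_sub_norm_le _ _
    have hxjb : dist p q ≤ jb (dist p q) := le_trans (le_abs_self _) (abs_le_jb _)
    rcases le_or_gt (dist p q) (2 * T) with hsmall | hbig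
    · refine Set.mem_iUnion.mpr ⟨0, ⟨hp, ?_⟩, ?_⟩
      · rw [Metric.mem_closedBall]
        simpa using hsmall
      · simp only [Set.mem_setOf_eq, pow_zero, one_mul]
        have h1 : T^2 ≤ 2 + dist p q ^ 2 := by
          rcases max_cases 1 |‖q‖ - r| with ⟨h1, h2⟩ | ⟨h1, h2⟩
          · rw [hT, h1]; nlinarith
          · rw [hT, h1]
            nlinarith [mul_self_le_mul_self (_root_.abs_nonneg (‖q‖ - r)) hxd]
        calc T = Real.sqrt (T^2) := (Real.sqrt_sq hT0.le).symm
          _ ≤ Real.sqrt (2 + dist p q ^ 2) := Real.sqrt_le_sqrt h1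
          _ = jb (dist p q) := rfl
    · set n : ℕ := ⌊dist p q / T⌋₊ with hn
      have hxT2 : 2 ≤ dist p q / T := by rw [le_div_iff₀ hT0]; linarith
      have hn2 : 2 ≤ n := Nat.le_floor (by exact_mod_cast hxT2)
      have hn0 : n ≠ 0 := by omega
      set k : ℕ := Nat.log 2 n with hk
      have hlow : (2:ℝ)^k ≤ dist p q / T := by
        calc ((2:ℝ))^k = ((2^k : ℕ) : ℝ) := by push_cast; ring
          _ ≤ (n : ℝ) := by exact_mod_cast Nat.pow_log_le_self 2 hn0
          _ ≤ dist p q / T := Nat.floor_le (by positivity)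
      have hhigh : dist p q / T < (2:ℝ)^(k+1) := by
        calc dist p q / T < (n : ℝ) + 1 := Nat.lt_floor_add_one _
          _ ≤ ((2:ℝ))^(k+1) := by
              have h2 : n + 1 ≤ 2^(k+1) := Nat.lt_pow_succ_log_self (by norm_num : 1 < 2) n
              exact_mod_cast h2
      refine Set.mem_iUnion.mpr ⟨k, ⟨hp, ?_⟩, ?_⟩
      · rw [Metric.mem_closedBall]
        rw [div_lt_iff₀ hT0] at hhigh
        linarith
      · simp only [Set.mem_setOf_eq]
        rw [le_div_iff₀ hT0] at hlow
        linarith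
  -- per-piece measure bound
  have hAk_meas : ∀ k, μH[(d:ℝ)-1] (Ak k) ≤
      ENNReal.ofReal (A * min (2^(k+1) * T) r ^ (d-1)) := by
    intro k
    calc μH[(d:ℝ)-1] (Ak k) ≤ μH[(d:ℝ)-1] (S ∩ Metric.closedBall q (2^(k+1) * T)) :=
          measure_mono Set.inter_subset_left
      _ ≤ _ := hA r (2^(k+1) * T) q hr (by positivity)
  have hgk : ∀ k, ∀ p ∈ Ak k, g p ≤ (ENNReal.ofReal ((2^k * T) ^ (2*d)))⁻¹ := by
    intro k p hp
    have h1 : 2^k * T ≤ jb (dist p q) := hp.2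
    rw [hg]
    apply ENNReal.inv_le_inv.mpr
    apply ENNReal.ofReal_le_ofReal
    rw [dist_eq_norm] at h1
    exact pow_le_pow_left₀ (by positivity) h1 _
  -- sum it up
  have hsum : ∫⁻ p in S, g p ∂(μH[(d:ℝ)-1]) ≤
      ∑' k, (ENNReal.ofReal ((2^k * T) ^ (2*d)))⁻¹ *
        ENNReal.ofReal (A * min (2^(k+1) * T) r ^ (d-1)) := by
    calc ∫⁻ p in S, g p ∂(μH[(d:ℝ)-1]) ≤ ∫⁻ p in ⋃ k, Ak k, g p ∂(μH[(d:ℝ)-1]) :=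
          lintegral_mono_set hcover
      _ ≤ ∑' k, ∫⁻ p in Ak k, g p ∂(μH[(d:ℝ)-1]) := lintegral_iUnion_le _ _
      _ ≤ _ := by
          apply ENNReal.tsum_le_tsum
          intro k
          calc ∫⁻ p in Ak k, g p ∂(μH[(d:ℝ)-1]) ≤
              ∫⁻ _ in Ak k, (ENNReal.ofReal ((2^k * T) ^ (2*d)))⁻¹ ∂(μH[(d:ℝ)-1]) :=
                setLIntegral_mono measurable_const (hgk k)
            _ = (ENNReal.ofReal ((2^k * T) ^ (2*d)))⁻¹ * μH[(d:ℝ)-1] (Ak k) :=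
                setLIntegral_const _ _
            _ ≤ _ := mul_le_mul_right (hAk_meas k) _
  -- per-term numeric bound
  have hterm : ∀ k : ℕ, (ENNReal.ofReal ((2^k * T) ^ (2*d)))⁻¹ *
      ENNReal.ofReal (A * min (2^(k+1) * T) r ^ (d-1)) ≤
      ENNReal.ofReal (A * 2^d * m^2 / T) * (ENNReal.ofReal (1/2))^k := by
    intro k
    have h2k : (0:ℝ) < 2^k := by positivity
    have hb0 : (0:ℝ) < 2^k * T := by positivity
    have hbd : (0:ℝ) < (2^k * T) ^ (2*d) := by positivity
    have hb1 : (1:ℝ) ≤ 2^k * T := by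
      calc (1:ℝ) = 1 * 1 := by ring
        _ ≤ 2^k * T := mul_le_mul (one_le_pow₀ (by norm_num)) hT1 (by norm_num) h2k.le
    have hminb : min (2^(k+1) * T) r ≤ (2^(k+1) * T) * m := by
      rcases le_or_gt 1 r with h1 | h1
      · rw [hm, min_eq_left h1, mul_one]
        exact min_le_left _ _
      · rw [hm, min_eq_right h1.le]
        have h2 : (1:ℝ) ≤ 2^(k+1) * T := by
          calc (1:ℝ) = 1 * 1 := by ring
            _ ≤ 2^(k+1) * T := mul_le_mul (one_le_pow₀ (by norm_num)) hT1 (by norm_num)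
                (by positivity)
        have : r ≤ (2^(k+1) * T) * r := le_mul_of_one_le_left hr.le h2
        exact le_trans (min_le_right _ _) this
    have hkey : min (2^(k+1) * T) r ^ (d-1) * (2^k * T) ≤ 2^(d-1) * m^2 * ((2^k * T)^(2*d)) := by
      have h1 : min (2^(k+1) * T) r ^ (d-1) ≤ ((2^(k+1) * T) * m) ^ (d-1) :=
        pow_le_pow_left₀ (le_min (by positivity) hr.le) hminb _
      have h2 : ((2^(k+1) * T) * m) ^ (d-1) = 2^(d-1) * (2^k * T)^(d-1) * m^(d-1) := by
        rw [show (2:ℝ)^(k+1) * T = 2 * (2^k * T) by ring]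
        rw [mul_pow, mul_pow]
      have h3 : m^(d-1) ≤ m^2 := pow_le_pow_of_le_one hm0.le hm1 (by omega)
      have h4 : (2^k * T)^(d-1) * (2^k * T) = (2^k * T)^d := by
        rw [← pow_succ]
        congr 1
        omega
      have h5 : (2^k * T)^d ≤ (2^k * T)^(2*d) := pow_le_pow_right₀ hb1 (by omega)
      calc min (2^(k+1) * T) r ^ (d-1) * (2^k * T)
          ≤ (2^(d-1) * (2^k * T)^(d-1) * m^(d-1)) * (2^k * T) := by
            rw [← h2]; exact mul_le_mul_of_nonneg_right h1 hb0.le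
        _ ≤ (2^(d-1) * (2^k * T)^(d-1) * m^2) * (2^k * T) := by
            apply mul_le_mul_of_nonneg_right _ hb0.le
            apply mul_le_mul_of_nonneg_left h3 (by positivity)
        _ = 2^(d-1) * m^2 * ((2^k * T)^(d-1) * (2^k * T)) := by ring
        _ = 2^(d-1) * m^2 * (2^k * T)^d := by rw [h4]
        _ ≤ 2^(d-1) * m^2 * (2^k * T)^(2*d) := by
            apply mul_le_mul_of_nonneg_left h5 (by positivity)
    have hreal : A * min (2^(k+1) * T) r ^ (d-1) / (2^k * T)^(2*d) ≤
        (A * 2^d * m^2 / T) * (1/2)^k := by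
      have hrw : (A * 2^d * m^2 / T) * ((1:ℝ)/2)^k = (A * 2^d * m^2) / (T * 2^k) := by
        rw [div_pow, one_pow]
        field_simp
      rw [hrw, div_le_div_iff₀ hbd (by positivity)]
      calc A * min (2^(k+1) * T) r ^ (d-1) * (T * 2^k)
          = A * (min (2^(k+1) * T) r ^ (d-1) * (2^k * T)) := by ring
        _ ≤ A * (2^(d-1) * m^2 * ((2^k * T)^(2*d))) :=
            mul_le_mul_of_nonneg_left hkey hApos.le
        _ ≤ A * (2^d * m^2 * ((2^k * T)^(2*d))) := by
            apply mul_le_mul_of_nonneg_left _ hApos.le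
            apply mul_le_mul_of_nonneg_right _ (by positivity)
            apply mul_le_mul_of_nonneg_right (pow_le_pow_right₀ (by norm_num) (by omega))
              (by positivity)
        _ = A * 2^d * m^2 * (2^k * T)^(2*d) := by ring
    calc (ENNReal.ofReal ((2^k * T) ^ (2*d)))⁻¹ *
        ENNReal.ofReal (A * min (2^(k+1) * T) r ^ (d-1))
        = ENNReal.ofReal (A * min (2^(k+1) * T) r ^ (d-1) / (2^k * T)^(2*d)) := by
          rw [← ENNReal.ofReal_inv_of_pos hbd, ← ENNReal.ofReal_mul (by positivity)]
          congr 1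
          rw [inv_mul_eq_div]
      _ ≤ ENNReal.ofReal ((A * 2^d * m^2 / T) * (1/2)^k) := ENNReal.ofReal_le_ofReal hreal
      _ = ENNReal.ofReal (A * 2^d * m^2 / T) * (ENNReal.ofReal (1/2))^k := by
          rw [ENNReal.ofReal_mul (by positivity), ENNReal.ofReal_pow (by norm_num)]
  -- geometric series
  have hgeo : ∑' k : ℕ, ENNReal.ofReal (A * 2^d * m^2 / T) * (ENNReal.ofReal (1/2))^k =
      ENNReal.ofReal (A * 2^d * m^2 / T) * 2 := by
    rw [ENNReal.tsum_mul_left, ENNReal.tsum_geometric]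
    congr 1
    rw [show ENNReal.ofReal (1/2) = 2⁻¹ by
      rw [one_div, ENNReal.ofReal_inv_of_pos (by norm_num)]
      norm_num]
    rw [ENNReal.one_sub_inv_two]
    exact inv_inv 2
  calc ∫⁻ p in S, g p ∂(μH[(d:ℝ)-1]) ≤
      ∑' k, (ENNReal.ofReal ((2^k * T) ^ (2*d)))⁻¹ *
        ENNReal.ofReal (A * min (2^(k+1) * T) r ^ (d-1)) := hsum
    _ ≤ ∑' k : ℕ, ENNReal.ofReal (A * 2^d * m^2 / T) * (ENNReal.ofReal (1/2))^k :=
        ENNReal.tsum_le_tsum hterm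
    _ = ENNReal.ofReal (A * 2^d * m^2 / T) * 2 := hgeo
    _ = ENNReal.ofReal (A * 2^d * 2 * m^2 / T) := by
        rw [show (2:ℝ≥0∞) = ENNReal.ofReal 2 by norm_num, ← ENNReal.ofReal_mul (by positivity)]
        congr 1
        ring

theorem statement11 (d : ℕ) (hd : 3 ≤ d) :
    ∃ C > (0 : ℝ),
      ∀ h : EuclideanSpace ℝ (Fin d) → ℂ, Measurable h →
      ∀ Ch : ℝ, (∀ x, jb ‖x‖ ^ (2 * d) * ‖h x‖ ≤ Ch) →
      ∀ s : ℝ, 0 < s → ∀ q : EuclideanSpace ℝ (Fin d),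
        (2 * s) ^ (-(1 / 2) : ℝ) *
            ∫ p in Metric.sphere (0 : EuclideanSpace ℝ (Fin d)) (Real.sqrt (2 * s)),
              ‖h (p - q)‖ ∂(μH[(d : ℝ) - 1]) ≤
          C * Ch * Real.sqrt s / (jb s * jb (‖q‖ - Real.sqrt (2 * s))) := by
  obtain ⟨A₁, hA₁pos, hA₁⟩ := lint_bound d hd
  refine ⟨6 * A₁, by positivity, ?_⟩
  intro h hmeas Ch hCh s hs q
  set r := Real.sqrt (2*s) with hrdef
  have hr0 : 0 < r := Real.sqrt_pos.mpr (by linarith)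
  have hr2 : r^2 = 2*s := Real.sq_sqrt (by linarith)
  have hCh0 : 0 ≤ Ch := le_trans (mul_nonneg (pow_nonneg (jb_pos _).le _) (norm_nonneg _)) (hCh 0)
  set T : ℝ := max 1 |‖q‖ - r| with hT
  have hT1 : (1:ℝ) ≤ T := le_max_left _ _
  have hT0 : (0:ℝ) < T := by linarith
  set m : ℝ := min 1 r with hm
  have hm0 : 0 < m := lt_min one_pos hr0
  have hm1 : m ≤ 1 := min_le_left _ _
  -- bound on the integral
  have hIle : ∫ p in Metric.sphere (0 : EuclideanSpace ℝ (Fin d)) r,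
      ‖h (p - q)‖ ∂(μH[(d:ℝ)-1]) ≤ Ch * (A₁ * m^2 / T) := by
    have hmble : AEStronglyMeasurable (fun p : EuclideanSpace ℝ (Fin d) =>
        ‖h (p - q)‖) ((μH[(d:ℝ)-1]).restrict (Metric.sphere 0 r)) :=
      (continuous_norm.measurable.comp
        (hmeas.comp (measurable_id.sub measurable_const))).aestronglyMeasurable
    rw [integral_eq_lintegral_of_nonneg_ae
      (Filter.Eventually.of_forall fun p => norm_nonneg _) hmble]
    have hle1 : ∫⁻ p in Metric.sphere (0 : EuclideanSpace ℝ (Fin d)) r,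
        ENNReal.ofReal (‖h (p - q)‖) ∂(μH[(d:ℝ)-1]) ≤
        ENNReal.ofReal Ch * ENNReal.ofReal (A₁ * m^2 / T) := by
      calc ∫⁻ p in Metric.sphere (0 : EuclideanSpace ℝ (Fin d)) r,
          ENNReal.ofReal (‖h (p - q)‖) ∂(μH[(d:ℝ)-1])
          ≤ ∫⁻ p in Metric.sphere (0 : EuclideanSpace ℝ (Fin d)) r,
            ENNReal.ofReal Ch * (ENNReal.ofReal (jb ‖p - q‖ ^ (2*d)))⁻¹ ∂(μH[(d:ℝ)-1]) := by
            apply lintegral_mono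
            intro p
            have hjb : 0 < jb ‖p - q‖ ^ (2*d) := pow_pos (jb_pos _) _
            have habs : ‖h (p - q)‖ ≤ Ch / jb ‖p - q‖ ^ (2*d) := by
              rw [le_div_iff₀ hjb, mul_comm]
              exact hCh _
            calc ENNReal.ofReal (‖h (p - q)‖)
                ≤ ENNReal.ofReal (Ch / jb ‖p - q‖ ^ (2*d)) := ENNReal.ofReal_le_ofReal habs
              _ = ENNReal.ofReal Ch * (ENNReal.ofReal (jb ‖p - q‖ ^ (2*d)))⁻¹ := by
                  rw [div_eq_mul_inv, ENNReal.ofReal_mul hCh0, ENNReal.ofReal_inv_of_pos hjb]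
        _ = ENNReal.ofReal Ch * ∫⁻ p in Metric.sphere (0 : EuclideanSpace ℝ (Fin d)) r,
              (ENNReal.ofReal (jb ‖p - q‖ ^ (2*d)))⁻¹ ∂(μH[(d:ℝ)-1]) :=
            lintegral_const_mul' _ _ ENNReal.ofReal_ne_top
        _ ≤ ENNReal.ofReal Ch * ENNReal.ofReal (A₁ * m^2 / T) :=
            mul_le_mul_right (hA₁ r q hr0) _
    calc (∫⁻ p in Metric.sphere (0 : EuclideanSpace ℝ (Fin d)) r,
          ENNReal.ofReal (‖h (p - q)‖) ∂(μH[(d:ℝ)-1])).toReal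
        ≤ (ENNReal.ofReal Ch * ENNReal.ofReal (A₁ * m^2 / T)).toReal :=
          ENNReal.toReal_mono (ENNReal.mul_ne_top ENNReal.ofReal_ne_top ENNReal.ofReal_ne_top) hle1
      _ = Ch * (A₁ * m^2 / T) := by
          rw [← ENNReal.ofReal_mul hCh0, ENNReal.toReal_ofReal (by positivity)]
  -- rewrite the power
  have hpow : (2*s : ℝ) ^ (-(1/2) : ℝ) = r⁻¹ := by
    rw [Real.rpow_neg (by linarith), hrdef, Real.sqrt_eq_rpow]
  -- final algebra
  have hjbΔ : jb (‖q‖ - r) ≤ 2*T := by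
    apply jb_le _ _ (by linarith)
    have habsT : |‖q‖ - r| ≤ T := le_max_right _ _
    nlinarith [mul_self_le_mul_self (_root_.abs_nonneg (‖q‖ - r)) habsT, _root_.sq_abs (‖q‖ - r)]
  have hmjb : m^2 * jb s ≤ 3*s := by
    rcases le_or_gt r 1 with h1 | h1
    · have hmr : m = r := min_eq_right h1
      have hs12 : s ≤ 1/2 := by nlinarith
      have : jb s ≤ 3/2 := jb_le _ _ (by norm_num) (by nlinarith)
      rw [hmr]
      nlinarith [jb_pos s]
    · have hmr : m = 1 := min_eq_left h1.le
      have hs12 : 1/2 ≤ s := by nlinarith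
      have : jb s ≤ 3*s := jb_le _ _ (by linarith) (by nlinarith)
      rw [hmr]
      nlinarith
  have hfin : r⁻¹ * (Ch * (A₁ * m^2 / T)) ≤
      6 * A₁ * Ch * Real.sqrt s / (jb s * jb (‖q‖ - r)) := by
    have hjbs := jb_pos s
    have hjbΔ0 := jb_pos (‖q‖ - r)
    have hrw : r⁻¹ * (Ch * (A₁ * m^2 / T)) = (Ch * A₁ * m^2)/(r * T) := by
      field_simp
    rw [hrw, div_le_div_iff₀ (by positivity : (0:ℝ) < r*T) (by positivity : (0:ℝ) < jb s * jb (‖q‖ - r))]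
    have hsqrt2 : (1:ℝ) ≤ Real.sqrt 2 := by
      rw [show (1:ℝ) = Real.sqrt 1 by simp]
      exact Real.sqrt_le_sqrt (by norm_num)
    have hsr : Real.sqrt s * r = Real.sqrt 2 * s := by
      rw [hrdef, ← Real.sqrt_mul hs.le]
      rw [show s * (2*s) = 2 * (s*s) by ring]
      rw [Real.sqrt_mul (by norm_num : (0:ℝ) ≤ 2), Real.sqrt_mul_self hs.le]
    have e1 : m^2 * jb s * jb (‖q‖ - r) ≤ 3*s*(2*T) :=
      mul_le_mul hmjb hjbΔ hjbΔ0.le (by positivity)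
    calc Ch * A₁ * m^2 * (jb s * jb (‖q‖ - r))
        = (Ch * A₁) * (m^2 * jb s * jb (‖q‖ - r)) := by ring
      _ ≤ (Ch * A₁) * (3*s*(2*T)) := by
          apply mul_le_mul_of_nonneg_left e1 (by positivity)
      _ = 6 * A₁ * Ch * s * T := by ring
      _ ≤ 6 * A₁ * Ch * (Real.sqrt 2 * s) * T := by
          nlinarith [mul_nonneg (mul_nonneg (mul_nonneg hA₁pos.le hCh0) hs.le) hT0.le]
      _ = 6 * A₁ * Ch * Real.sqrt s * (r * T) := by rw [← hsr]; ring
  rw [hpow]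
  calc r⁻¹ * ∫ p in Metric.sphere (0 : EuclideanSpace ℝ (Fin d)) r,
        ‖h (p - q)‖ ∂(μH[(d:ℝ)-1])
      ≤ r⁻¹ * (Ch * (A₁ * m^2 / T)) := by
        apply mul_le_mul_of_nonneg_left hIle (by positivity)
    _ ≤ 6 * A₁ * Ch * Real.sqrt s / (jb s * jb (‖q‖ - r)) := hfin
end
end

section
/- For every K ≥ 1 and every infinite sequence γ̃ = (γ̃₁, γ̃₂, …) with entries in L ∪ {ϑ}, there exist k ≤ K and n with k ≤ n ≤ k+4 such that the truncation γ̃_{[1,n]} belongs to Γ̃(n,K) and k = k(γ̃_{[1,n]}). Moreover, for each fixed n and K the constituent sets of the union Γ̃(n,K), namely Γ̃_{n,K}^{(0),nr}, Γ̃_{n,K}^{(1),nr}, and for each 0 ≤ k ≤ K the sets Γ̃_{n,k}^{(1),tri}, Γ̃_{n,k}^{(0),rec}, Γ̃_{n,k}^{(1),rec}, Γ̃_{n,k}^{(1),nest}, Γ̃_{n,k}^{(2),last}, are pairwise disjoint; in particular, for the smallest such n the truncation γ̃_{[1,n]} belongs to exactly one of these sets. -/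
noncomputable section

open scoped Classical

variable {L : Type*}

/-- The set of (0-based) skeleton indices of the first `n` entries of `γ`,
where `none` plays the role of the counterterm symbol `ϑ`.  This is the
recursive definition of `S(γ̃)`:  a `ϑ` entry leaves the skeleton unchanged;
a potential entry equal to the previous entry, whose index is currently a
skeleton index, removes that index (forming a gate); otherwise the new index
is added to the skeleton. -/
def skel (γ : ℕ → Option L) : ℕ → Finset ℕ
  | 0 => ∅
  | n + 1 =>
    if γ n = none then skel γ n
    else if n - 1 ∈ skel γ n ∧ γ n = γ (n - 1) ∧ 1 ≤ n then (skel γ n).erase (n - 1)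
    else insert n (skel γ n)

/-- `k(γ̃)`: the number of skeleton indices. -/
def kc (γ : ℕ → Option L) (n : ℕ) : ℕ := (skel γ n).card

/-- `t(γ̃)`: the number of `ϑ`-indices. -/
def tc (γ : ℕ → Option L) (n : ℕ) : ℕ :=
  ((Finset.range n).filter fun j => γ j = none).card

/-- `r(γ̃) = t(γ̃) + (n − k(γ̃) − t(γ̃))/2`: the total `λ²`-power carried by
non-skeleton indices. -/
def rc (γ : ℕ → Option L) (n : ℕ) : ℕ :=
  tc γ n + (n - kc γ n - tc γ n) / 2

/-- Non-repetitive sequences: any two coinciding non-`ϑ` entries are adjacent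
and neither is a skeleton index. -/
def isNR (γ : ℕ → Option L) (n : ℕ) : Prop :=
  ∀ j < n, ∀ j' < n, j ≠ j' → γ j = γ j' → γ j ≠ none →
    (j' = j + 1 ∨ j = j' + 1) ∧ j ∉ skel γ n ∧ j' ∉ skel γ n

/-- Membership in `Γ̃*_n`: the length-`n` sequence is repetitive (i.e. not in
`Γ̃_n^{nr} = ⋃_{k≤n,r≤2} Γ̃_{n,k}^{(r),nr}`), but its truncation of length `n−1`
is non-repetitive. -/
def Gstar (γ : ℕ → Option L) (n : ℕ) : Prop :=
  ¬(isNR γ n ∧ rc γ n ≤ 2) ∧ (isNR γ (n - 1) ∧ rc γ (n - 1) ≤ 2)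

/-- `γ̃_{[1,n]} ∈ Γ̃_{n,k}^{(r),nr}`. -/
def memNR (γ : ℕ → Option L) (n k r : ℕ) : Prop :=
  isNR γ n ∧ kc γ n = k ∧ rc γ n = r

/-- `γ̃_{[1,n]} ∈ Γ̃_{n,k}^{(r),last}`: non-repetitive with non-skeleton last entry. -/
def memLast (γ : ℕ → Option L) (n k r : ℕ) : Prop :=
  memNR γ n k r ∧ 1 ≤ n ∧ n - 1 ∉ skel γ n

/-- The last entry triples with a gate: `∃ j ≤ n−2` (1-based) with `j, j+1`
non-skeleton and `γ̃_n = γ̃_j = γ̃_{j+1}` (all indices here 0-based). -/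
def triCond (γ : ℕ → Option L) (n : ℕ) : Prop :=
  ∃ j : ℕ, j + 3 ≤ n ∧ j ∉ skel γ n ∧ j + 1 ∉ skel γ n ∧
    γ (n - 1) = γ j ∧ γ j = γ (j + 1)

/-- `γ̃_{[1,n]} ∈ Γ̃_{n,k}^{(r),tri}`. -/
def memTri (γ : ℕ → Option L) (n k r : ℕ) : Prop :=
  Gstar γ n ∧ kc γ n = k ∧ rc γ n = r ∧ (n - 1) ∈ skel γ n ∧ triCond γ n

/-- The recollision condition: a skeleton index `j ≤ n−2` (1-based) with
`γ̃_j = γ̃_n` and a skeleton index strictly between them. -/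
def recCond (γ : ℕ → Option L) (n : ℕ) : Prop :=
  ∃ j ∈ skel γ n, j + 3 ≤ n ∧ γ j = γ (n - 1) ∧
    ∃ i ∈ skel γ n, j < i ∧ i + 1 < n

/-- `γ̃_{[1,n]} ∈ Γ̃_{n,k}^{(r),rec}`. -/
def memRec (γ : ℕ → Option L) (n k r : ℕ) : Prop :=
  Gstar γ n ∧ kc γ n = k ∧ rc γ n = r ∧ ¬((n - 1) ∈ skel γ n ∧ triCond γ n) ∧
    recCond γ n

/-- `γ̃_{[1,n]} ∈ Γ̃_{n,k}^{(r),nest}`. -/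
def memNest (γ : ℕ → Option L) (n k r : ℕ) : Prop :=
  Gstar γ n ∧ kc γ n = k ∧ rc γ n = r ∧ ¬((n - 1) ∈ skel γ n ∧ triCond γ n) ∧
    ¬recCond γ n ∧ ∃ j ∈ skel γ n, j + 3 ≤ n ∧ γ j = γ (n - 1)

/-- Tags for the constituent sets of the stopping-rule union `Γ̃(n,K)`. -/
inductive StopTag where
  | nr0 : StopTag                -- Γ̃_{n,K}^{(0),nr}
  | nr1 : StopTag                -- Γ̃_{n,K}^{(1),nr}
  | tri (k : ℕ) : StopTag        -- Γ̃_{n,k}^{(1),tri}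
  | rec0 (k : ℕ) : StopTag       -- Γ̃_{n,k}^{(0),rec}
  | rec1 (k : ℕ) : StopTag       -- Γ̃_{n,k}^{(1),rec}
  | nest (k : ℕ) : StopTag       -- Γ̃_{n,k}^{(1),nest}
  | last (k : ℕ) : StopTag       -- Γ̃_{n,k}^{(2),last}

/-- Membership of the length-`n` truncation of `γ` in the constituent set of
`Γ̃(n,K)` labelled by the tag. -/
def memTag (γ : ℕ → Option L) (n K : ℕ) : StopTag → Prop
  | .nr0 => memNR γ n K 0
  | .nr1 => memNR γ n K 1
  | .tri k => k ≤ K ∧ memTri γ n k 1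
  | .rec0 k => k ≤ K ∧ memRec γ n k 0
  | .rec1 k => k ≤ K ∧ memRec γ n k 1
  | .nest k => k ≤ K ∧ memNest γ n k 1
  | .last k => k ≤ K ∧ memLast γ n k 2

section Aux

variable (γ : ℕ → Option L)

lemma skel_subset : ∀ n, skel γ n ⊆ Finset.range n
  | 0 => by simp [skel]
  | n + 1 => by
    rw [skel]
    have ih := skel_subset n
    have hsub : Finset.range n ⊆ Finset.range (n + 1) := Finset.range_subset_range.mpr (Nat.le_succ n)
    split_ifs with h1 h2
    · exact ih.trans hsub
    · exact ((Finset.erase_subset _ _).trans ih).trans hsub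
    · intro x hx
      rcases Finset.mem_insert.mp hx with rfl | hx
      · exact Finset.self_mem_range_succ x
      · exact hsub (ih hx)

lemma skel_ne_none : ∀ n, ∀ j ∈ skel γ n, γ j ≠ none
  | 0 => by simp [skel]
  | n + 1 => by
    rw [skel]
    have ih := skel_ne_none n
    split_ifs with h1 h2
    · exact ih
    · exact fun j hj => ih j (Finset.mem_of_mem_erase hj)
    · intro j hj
      rcases Finset.mem_insert.mp hj with rfl | hj
      · exact h1
      · exact ih j hj

lemma tc_succ (n : ℕ) : tc γ (n + 1) = tc γ n + if γ n = none then 1 else 0 := by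
  unfold tc
  rw [Finset.range_add_one, Finset.filter_insert]
  split_ifs with h
  · rw [Finset.card_insert_of_notMem (by simp)]
  · rfl

lemma step_cases (n : ℕ) :
    (γ n = none ∧ skel γ (n+1) = skel γ n ∧ tc γ (n+1) = tc γ n + 1 ∧ kc γ (n+1) = kc γ n) ∨
    (γ n ≠ none ∧ (n - 1 ∈ skel γ n ∧ γ n = γ (n-1) ∧ 1 ≤ n) ∧
      skel γ (n+1) = (skel γ n).erase (n-1) ∧ tc γ (n+1) = tc γ n ∧ kc γ (n+1) + 1 = kc γ n) ∨
    (γ n ≠ none ∧ ¬(n - 1 ∈ skel γ n ∧ γ n = γ (n-1) ∧ 1 ≤ n) ∧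
      skel γ (n+1) = insert n (skel γ n) ∧ tc γ (n+1) = tc γ n ∧ kc γ (n+1) = kc γ n + 1) := by
  by_cases h1 : γ n = none
  · left
    have hs : skel γ (n+1) = skel γ n := by rw [skel, if_pos h1]
    exact ⟨h1, hs, by rw [tc_succ]; simp [h1], by rw [kc, kc, hs]⟩
  · by_cases h2 : n - 1 ∈ skel γ n ∧ γ n = γ (n-1) ∧ 1 ≤ n
    · right; left
      have hs : skel γ (n+1) = (skel γ n).erase (n-1) := by rw [skel, if_neg h1, if_pos h2]
      refine ⟨h1, h2, hs, by rw [tc_succ]; simp [h1], ?_⟩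
      rw [kc, kc, hs, Finset.card_erase_of_mem h2.1]
      have : 1 ≤ (skel γ n).card := Finset.card_pos.mpr ⟨_, h2.1⟩
      omega
    · right; right
      have hs : skel γ (n+1) = insert n (skel γ n) := by rw [skel, if_neg h1, if_neg h2]
      refine ⟨h1, h2, hs, by rw [tc_succ]; simp [h1], ?_⟩
      rw [kc, kc, hs, Finset.card_insert_of_notMem (fun hc => absurd (skel_subset γ n hc) (by simp))]

lemma decomp : ∀ n, ∃ m, n = kc γ n + tc γ n + 2 * m
  | 0 => ⟨0, by simp [kc, tc, skel]⟩
  | n + 1 => by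
    obtain ⟨m, hm⟩ := decomp n
    rcases step_cases γ n with ⟨_, _, ht, hk⟩ | ⟨_, _, _, ht, hk⟩ | ⟨_, _, _, ht, hk⟩
    · exact ⟨m, by omega⟩
    · exact ⟨m + 1, by omega⟩
    · exact ⟨m, by omega⟩

lemma rc_eq {n m : ℕ} (h : n = kc γ n + tc γ n + 2 * m) : rc γ n = tc γ n + m := by
  unfold rc; omega

lemma kc_le (n : ℕ) : kc γ n ≤ n := by
  simpa [kc] using Finset.card_le_card (skel_subset γ n)

lemma partner : ∀ n, ∀ j < n, γ j ≠ none → j ∉ skel γ n →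
    (γ j = γ (j + 1) ∧ j + 1 < n ∧ j + 1 ∉ skel γ n) ∨
    (1 ≤ j ∧ γ j = γ (j - 1) ∧ j - 1 ∉ skel γ n)
  | 0 => fun j hj => absurd hj (by omega)
  | n + 1 => by
    intro j hj hne hns
    rcases step_cases γ n with ⟨h0, hs, -, -⟩ | ⟨h0, hg, hs, -, -⟩ | ⟨h0, hg, hs, -, -⟩
    · have hjn : j < n := by
        rcases Nat.lt_succ_iff_lt_or_eq.mp hj with h | rfl
        · exact h
        · exact absurd h0 hne
      rw [hs] at hns
      rcases partner n j hjn hne hns with ⟨h1, h2, h3⟩ | ⟨h1, h2, h3⟩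
      · exact Or.inl ⟨h1, by omega, by rw [hs]; exact h3⟩
      · exact Or.inr ⟨h1, h2, by rw [hs]; exact h3⟩
    · have h1n : 1 ≤ n := hg.2.2
      rcases Nat.lt_succ_iff_lt_or_eq.mp hj with hjn | rfl
      · by_cases hje : j = n - 1
        · have e : j + 1 = n := by omega
          refine Or.inl ⟨?_, by omega, ?_⟩
          · rw [e, hje]; exact hg.2.1.symm
          · rw [e, hs]
            intro hc
            exact absurd (skel_subset γ n (Finset.mem_of_mem_erase hc)) (by simp)
        · have hns' : j ∉ skel γ n := by
            rw [hs] at hns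
            intro hc; exact hns (Finset.mem_erase.mpr ⟨hje, hc⟩)
          rcases partner n j hjn hne hns' with ⟨h1, h2, h3⟩ | ⟨h1, h2, h3⟩
          · refine Or.inl ⟨h1, by omega, ?_⟩
            rw [hs]; exact fun hc => h3 (Finset.mem_of_mem_erase hc)
          · refine Or.inr ⟨h1, h2, ?_⟩
            rw [hs]; exact fun hc => h3 (Finset.mem_of_mem_erase hc)
      · refine Or.inr ⟨h1n, hg.2.1, ?_⟩
        rw [hs]
        exact Finset.notMem_erase _ _
    · rcases Nat.lt_succ_iff_lt_or_eq.mp hj with hjn | rfl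
      · have hns' : j ∉ skel γ n := fun hc => hns (by rw [hs]; exact Finset.mem_insert_of_mem hc)
        rcases partner n j hjn hne hns' with ⟨h1, h2, h3⟩ | ⟨h1, h2, h3⟩
        · refine Or.inl ⟨h1, by omega, fun hc => ?_⟩
          rw [hs] at hc
          rcases Finset.mem_insert.mp hc with h | h
          · omega
          · exact h3 h
        · refine Or.inr ⟨h1, h2, fun hc => ?_⟩
          rw [hs] at hc
          rcases Finset.mem_insert.mp hc with h | h
          · omega
          · exact h3 h
      · exact absurd (by rw [hs]; exact Finset.mem_insert_self _ _) hns

lemma two_nonskel (n a b : ℕ) (ha : a < n) (hb : b < n) (hab : a ≠ b)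
    (ha1 : a ∉ skel γ n) (hb1 : b ∉ skel γ n) (ha2 : γ a ≠ none) (hb2 : γ b ≠ none) :
    kc γ n + tc γ n + 2 ≤ n := by
  have hdisj : Disjoint (skel γ n) ((Finset.range n).filter fun j => γ j = none) := by
    rw [Finset.disjoint_left]
    intro x hx hxT
    exact skel_ne_none γ n x hx (Finset.mem_filter.mp hxT).2
  have hsub : (skel γ n ∪ (Finset.range n).filter fun j => γ j = none) ∪ {a, b} ⊆
      Finset.range n := by
    intro x hx
    rcases Finset.mem_union.mp hx with hx | hx
    · rcases Finset.mem_union.mp hx with hx | hx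
      · exact skel_subset γ n hx
      · exact (Finset.mem_filter.mp hx).1
    · rcases Finset.mem_insert.mp hx with rfl | hx
      · exact Finset.mem_range.mpr ha
      · rw [Finset.mem_singleton.mp hx]; exact Finset.mem_range.mpr hb
  have hd2 : Disjoint (skel γ n ∪ (Finset.range n).filter fun j => γ j = none)
      ({a, b} : Finset ℕ) := by
    rw [Finset.disjoint_right]
    intro x hx hxU
    rcases Finset.mem_insert.mp hx with rfl | hx
    · rcases Finset.mem_union.mp hxU with h | h
      · exact ha1 h
      · exact ha2 (Finset.mem_filter.mp h).2
    · rw [Finset.mem_singleton.mp hx] at hxU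
      rcases Finset.mem_union.mp hxU with h | h
      · exact hb1 h
      · exact hb2 (Finset.mem_filter.mp h).2
  have hcard := Finset.card_le_card hsub
  rw [Finset.card_union_of_disjoint hd2, Finset.card_union_of_disjoint hdisj,
    Finset.card_range, Finset.card_pair hab] at hcard
  unfold kc tc
  omega

end Aux

/-- **Stopping rule.**  For every `K ≥ 1` and every infinite collision
sequence there are a unique `k ≤ K` and `n ∈ [k, k+4]` such that the length-`n`
truncation lies in the union `Γ̃(n,K)` and has exactly `k` skeleton indices;
moreover, for every fixed `n` and `K` the constituent sets of `Γ̃(n,K)` are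
pairwise disjoint. -/
theorem statement13 {L : Type*} [Countable L] (K : ℕ) (hK : 1 ≤ K)
    (γ : ℕ → Option L) :
    (∃ k ≤ K, ∃ n : ℕ, k ≤ n ∧ n ≤ k + 4 ∧ (∃ t : StopTag, memTag γ n K t) ∧
      kc γ n = k) ∧
    (∀ (n K' : ℕ) (δ : ℕ → Option L) (t t' : StopTag),
      memTag δ n K' t → memTag δ n K' t' → t = t') := by
  constructor
  · -- existence
    have kc0 : kc γ 0 = 0 := by simp [kc, skel]
    have tc0 : tc γ 0 = 0 := by simp [tc]
    have rc0 : rc γ 0 = 0 := by simp [rc, kc0, tc0]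
    have isNR0 : isNR γ 0 := fun j hj => absurd hj (by omega)
    have hex : ∃ n, (isNR γ n ∧ rc γ n ≤ 1 ∧ kc γ n = K) ∨ 2 ≤ rc γ n ∨ ¬ isNR γ n := by
      by_contra hc
      push_neg at hc
      have hfacts : ∀ n, isNR γ n ∧ rc γ n ≤ 1 ∧ kc γ n ≠ K := by
        intro n
        obtain ⟨h1, h2, h3⟩ := hc n
        exact ⟨h3, by omega, h1 h3 (by omega)⟩
      have hlt : ∀ n, kc γ n < K := by
        intro n
        induction n with
        | zero => rw [kc0]; omega
        | succ n ih =>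
          have hstep : kc γ (n+1) ≤ kc γ n + 1 := by
            rcases step_cases γ n with ⟨_,_,_,hk⟩|⟨_,_,_,_,hk⟩|⟨_,_,_,_,hk⟩ <;> omega
          have := (hfacts (n+1)).2.2
          omega
      obtain ⟨m, hm⟩ := decomp γ (K + 3)
      have hrc := rc_eq γ hm
      have h1 := (hfacts (K+3)).2.1
      have h2 := hlt (K + 3)
      omega
    obtain ⟨n, hPn, hmin⟩ : ∃ n, ((isNR γ n ∧ rc γ n ≤ 1 ∧ kc γ n = K) ∨ 2 ≤ rc γ n ∨ ¬ isNR γ n)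
        ∧ ∀ m, m < n → ¬((isNR γ m ∧ rc γ m ≤ 1 ∧ kc γ m = K) ∨ 2 ≤ rc γ m ∨ ¬ isNR γ m) :=
      ⟨Nat.find hex, Nat.find_spec hex, fun m hm => Nat.find_min hex hm⟩
    obtain ⟨p, rfl⟩ : ∃ p, n = p + 1 := by
      refine ⟨n - 1, ?_⟩
      rcases Nat.eq_zero_or_pos n with rfl | h
      · exfalso
        rcases hPn with ⟨-, -, hk⟩ | h2 | h3
        · omega
        · omega
        · exact h3 isNR0
      · omega
    have hnotP : ∀ m, m ≤ p → isNR γ m ∧ rc γ m ≤ 1 ∧ kc γ m ≠ K := by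
      intro m hm
      have h := hmin m (by omega)
      push_neg at h
      obtain ⟨h1, h2, h3⟩ := h
      exact ⟨h3, by omega, h1 h3 (by omega)⟩
    have hkclt : ∀ m, m ≤ p → kc γ m < K := by
      intro m
      induction m with
      | zero => intro _; rw [kc0]; omega
      | succ m ih =>
        intro hm
        have h1 := ih (by omega)
        have h2 := (hnotP (m+1) hm).2.2
        have hstep : kc γ (m+1) ≤ kc γ m + 1 := by
          rcases step_cases γ m with ⟨_,_,_,hk⟩|⟨_,_,_,_,hk⟩|⟨_,_,_,_,hk⟩ <;> omega
        omega
    have hpN : isNR γ p := (hnotP p le_rfl).1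
    have hpr : rc γ p ≤ 1 := (hnotP p le_rfl).2.1
    have hpk : kc γ p < K := hkclt p le_rfl
    obtain ⟨m1, hm1⟩ := decomp γ p
    obtain ⟨m2, hm2⟩ := decomp γ (p+1)
    have hr1 := rc_eq γ hm1
    have hr2 := rc_eq γ hm2
    by_cases hNR : isNR γ (p+1)
    · rcases hPn with ⟨h1, h2, h3⟩ | h2 | h3
      · -- Case A
        rcases (show rc γ (p+1) = 0 ∨ rc γ (p+1) = 1 by omega) with h | h
        · exact ⟨K, le_rfl, p+1, by have := kc_le γ (p+1); omega, by omega, ⟨.nr0, hNR, h3, h⟩, h3⟩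
        · exact ⟨K, le_rfl, p+1, by have := kc_le γ (p+1); omega, by omega, ⟨.nr1, hNR, h3, h⟩, h3⟩
      · -- Case B
        have hsub : skel γ (p+1) ⊆ skel γ p ∧ kc γ (p+1) ≤ kc γ p := by
          rcases step_cases γ p with ⟨h0, hs, ht, hk⟩ | ⟨h0, hg, hs, ht, hk⟩ | ⟨h0, hg, hs, ht, hk⟩
          · exact ⟨by rw [hs], by omega⟩
          · exact ⟨by rw [hs]; exact Finset.erase_subset _ _, by omega⟩
          · exfalso; omega
        have hpns : p ∉ skel γ (p+1) := fun hc => absurd (skel_subset γ p (hsub.1 hc)) (by simp)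
        have hrc2 : rc γ (p+1) = 2 := by
          rcases step_cases γ p with ⟨h0, hs, ht, hk⟩ | ⟨h0, hg, hs, ht, hk⟩ | ⟨h0, hg, hs, ht, hk⟩ <;>
            omega
        have hkK : kc γ (p+1) ≤ K := by omega
        refine ⟨kc γ (p+1), hkK, p+1, kc_le γ (p+1), by omega,
          ⟨.last (kc γ (p+1)), hkK, ⟨hNR, rfl, hrc2⟩, by omega, hpns⟩, rfl⟩
      · exact absurd hNR h3
    · -- Case C
      obtain ⟨hγp, hnogate, hins⟩ :
          γ p ≠ none ∧ ¬(p - 1 ∈ skel γ p ∧ γ p = γ (p - 1) ∧ 1 ≤ p) ∧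
            skel γ (p+1) = insert p (skel γ p) := by
        rcases step_cases γ p with ⟨h0, hs, ht, hk⟩ | ⟨h0, hg, hs, ht, hk⟩ | ⟨h0, hg, hs, ht, hk⟩
        · exfalso
          apply hNR
          intro j hj j' hj' hne heq hnn
          have hj1 : j ≠ p := by rintro rfl; exact hnn h0
          have hj2 : j' ≠ p := by rintro rfl; exact (heq ▸ hnn) h0
          obtain ⟨ha, hb, hc2⟩ := hpN j (by omega) j' (by omega) hne heq hnn
          exact ⟨ha, by rw [hs]; exact hb, by rw [hs]; exact hc2⟩
        · exfalso
          have hpns : p ∉ skel γ (p+1) := by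
            rw [hs]
            intro hc
            exact absurd (skel_subset γ p (Finset.mem_of_mem_erase hc)) (by simp)
          have h1p : 1 ≤ p := hg.2.2
          have main : ∀ j, j < p → γ j = γ p → p = j + 1 ∧ j ∉ skel γ (p+1) := by
            intro j hjp hjeq
            by_cases hje : j = p - 1
            · subst hje
              exact ⟨by omega, by rw [hs]; exact Finset.notMem_erase _ _⟩
            · exfalso
              obtain ⟨-, -, hB⟩ := hpN j (by omega) (p-1) (by omega) hje
                (by rw [hjeq, hg.2.1]) (by rw [hjeq]; exact h0)
              exact hB hg.1
          apply hNR
          intro j hj j' hj' hne heq hnn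
          by_cases hj2 : j' = p
          · subst hj2
            obtain ⟨ha, hb⟩ := main j (by omega) heq
            exact ⟨Or.inl ha, hb, hpns⟩
          · by_cases hj1 : j = p
            · subst hj1
              obtain ⟨ha, hb⟩ := main j' (by omega) heq.symm
              exact ⟨Or.inr ha, hpns, hb⟩
            · obtain ⟨ha, hb, hc2⟩ := hpN j (by omega) j' (by omega) hne heq hnn
              refine ⟨ha, ?_, ?_⟩ <;> rw [hs]
              · exact fun hc => hb (Finset.mem_of_mem_erase hc)
              · exact fun hc => hc2 (Finset.mem_of_mem_erase hc)
        · exact ⟨h0, hg, hs⟩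
      have hpmem : p ∈ skel γ (p+1) := by rw [hins]; exact Finset.mem_insert_self _ _
      have hkc1 : kc γ (p+1) = kc γ p + 1 := by
        rw [kc, kc, hins,
          Finset.card_insert_of_notMem (fun hc => absurd (skel_subset γ p hc) (by simp))]
      have htc1 : tc γ (p+1) = tc γ p := by rw [tc_succ]; simp [hγp]
      have hrcle : rc γ (p+1) ≤ 1 := by omega
      have hkK : kc γ (p+1) ≤ K := by omega
      have hGs : Gstar γ (p+1) := ⟨fun h => hNR h.1, hpN, by show rc γ p ≤ 2; omega⟩
      have hj0 : ∃ j, j < p ∧ γ j = γ p := by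
        by_contra hno
        push_neg at hno
        apply hNR
        intro j hj j' hj' hne heq hnn
        have hj1 : j ≠ p := by rintro rfl; exact hno j' (by omega) heq.symm
        have hj2 : j' ≠ p := by rintro rfl; exact hno j (by omega) heq
        obtain ⟨ha, hb, hc2⟩ := hpN j (by omega) j' (by omega) hne heq hnn
        refine ⟨ha, ?_, ?_⟩ <;> rw [hins]
        · intro hc
          rcases Finset.mem_insert.mp hc with h | h
          · exact hj1 h
          · exact hb h
        · intro hc
          rcases Finset.mem_insert.mp hc with h | h
          · exact hj2 h
          · exact hc2 h
      have hbound1 : kc γ (p+1) ≤ p + 1 := kc_le γ (p+1)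
      have hbound2 : p + 1 ≤ kc γ (p+1) + 4 := by omega
      by_cases hQ : triCond γ (p+1)
      · -- tri
        have hrceq : rc γ (p+1) = 1 := by
          obtain ⟨j0, hj3, hjs0, hjs1, he1, he2⟩ := hQ
          have h2n := two_nonskel γ (p+1) j0 (j0+1) (by omega) (by omega) (by omega) hjs0 hjs1
            (by rw [← he1]; exact hγp) (by rw [← he2, ← he1]; exact hγp)
          omega
        exact ⟨kc γ (p+1), hkK, p+1, hbound1, hbound2,
          ⟨.tri (kc γ (p+1)), hkK, hGs, rfl, hrceq, hpmem, hQ⟩, rfl⟩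
      · -- not tri
        have hC1 : ∀ i, i < p → γ i = γ p → i ∈ skel γ (p+1) ∧ i + 3 ≤ p + 1 := by
          intro i hip hieq
          have hinn : γ i ≠ none := by rw [hieq]; exact hγp
          have hiS : i ∈ skel γ (p+1) := by
            by_contra hiS
            rcases partner γ (p+1) i (by omega) hinn hiS with ⟨h1, h2, h3⟩ | ⟨h1, h2, h3⟩
            · have hne : i + 1 ≠ p := fun h => h3 (by rw [h]; exact hpmem)
              exact hQ ⟨i, by omega, hiS, h3, hieq.symm, h1⟩
            · have e : i - 1 + 1 = i := by omega
              refine hQ ⟨i - 1, by omega, h3, ?_, ?_, ?_⟩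
              · rw [e]; exact hiS
              · rw [← h2]; exact hieq.symm
              · rw [e]; exact h2.symm
          refine ⟨hiS, ?_⟩
          by_contra hlt
          have h1p : 1 ≤ p := by omega
          apply hnogate
          have hiS' := hiS
          rw [hins] at hiS'
          have hmem : i ∈ skel γ p := by
            rcases Finset.mem_insert.mp hiS' with h | h
            · omega
            · exact h
          have hie : i = p - 1 := by omega
          rw [hie] at hmem hieq
          exact ⟨hmem, hieq.symm, h1p⟩
        obtain ⟨j, hjp, hjeq⟩ := hj0
        obtain ⟨hjS, hj3⟩ := hC1 j hjp hjeq
        by_cases hR : recCond γ (p+1)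
        · rcases (show rc γ (p+1) = 0 ∨ rc γ (p+1) = 1 by omega) with h | h
          · exact ⟨kc γ (p+1), hkK, p+1, hbound1, hbound2,
              ⟨.rec0 (kc γ (p+1)), hkK, hGs, rfl, h, fun hh => hQ hh.2, hR⟩, rfl⟩
          · exact ⟨kc γ (p+1), hkK, p+1, hbound1, hbound2,
              ⟨.rec1 (kc γ (p+1)), hkK, hGs, rfl, h, fun hh => hQ hh.2, hR⟩, rfl⟩
        · -- nest
          have hp1ns : p - 1 ∉ skel γ (p+1) := by
            intro hc
            exact hR ⟨j, hjS, hj3, hjeq, p - 1, hc, by omega, by omega⟩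
          have hrceq : rc γ (p+1) = 1 := by
            by_cases hth : γ (p - 1) = none
            · have hmemf : p - 1 ∈ (Finset.range (p+1)).filter (fun j => γ j = none) :=
                Finset.mem_filter.mpr ⟨Finset.mem_range.mpr (by omega), hth⟩
              have h1tc : 0 < tc γ (p+1) := Finset.card_pos.mpr ⟨_, hmemf⟩
              omega
            · rcases partner γ (p+1) (p-1) (by omega) hth hp1ns with ⟨h1, h2, h3⟩ | ⟨h1, h2, h3⟩
              · exact absurd hpmem (by rwa [show p - 1 + 1 = p by omega] at h3)
              · have h2n := two_nonskel γ (p+1) (p-1) (p-1-1) (by omega) (by omega) (by omega)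
                  hp1ns h3 hth (by rw [← h2]; exact hth)
                omega
          exact ⟨kc γ (p+1), hkK, p+1, hbound1, hbound2,
            ⟨.nest (kc γ (p+1)), hkK, hGs, rfl, hrceq, fun hh => hQ hh.2, hR, j, hjS, hj3, hjeq⟩,
            rfl⟩
  · -- disjointness
    intro n K' δ t t' h h'
    have contra : ∀ {kk rr : ℕ}, rr ≤ 2 → memNR δ n kk rr → Gstar δ n → False := by
      intro kk rr hrr hmem hG
      exact hG.1 ⟨hmem.1, by rw [hmem.2.2]; exact hrr⟩
    cases t with
    | nr0 =>
      cases t' with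
      | nr0 => rfl
      | nr1 => exfalso; have a := h.2.2; have b := h'.2.2; omega
      | tri k => exact (contra (by omega) h h'.2.1).elim
      | rec0 k => exact (contra (by omega) h h'.2.1).elim
      | rec1 k => exact (contra (by omega) h h'.2.1).elim
      | nest k => exact (contra (by omega) h h'.2.1).elim
      | last k => exfalso; have a := h.2.2; have b := h'.2.1.2.2; omega
    | nr1 =>
      cases t' with
      | nr0 => exfalso; have a := h.2.2; have b := h'.2.2; omega
      | nr1 => rfl
      | tri k => exact (contra (by omega) h h'.2.1).elim
      | rec0 k => exact (contra (by omega) h h'.2.1).elim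
      | rec1 k => exact (contra (by omega) h h'.2.1).elim
      | nest k => exact (contra (by omega) h h'.2.1).elim
      | last k => exfalso; have a := h.2.2; have b := h'.2.1.2.2; omega
    | tri k =>
      cases t' with
      | nr0 => exact (contra (by omega) h' h.2.1).elim
      | nr1 => exact (contra (by omega) h' h.2.1).elim
      | tri k' => exact congrArg StopTag.tri (h.2.2.1.symm.trans h'.2.2.1)
      | rec0 k' => exact (h'.2.2.2.2.1 ⟨h.2.2.2.2.1, h.2.2.2.2.2⟩).elim
      | rec1 k' => exact (h'.2.2.2.2.1 ⟨h.2.2.2.2.1, h.2.2.2.2.2⟩).elim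
      | nest k' => exact (h'.2.2.2.2.1 ⟨h.2.2.2.2.1, h.2.2.2.2.2⟩).elim
      | last k' => exact (contra (by omega) h'.2.1 h.2.1).elim
    | rec0 k =>
      cases t' with
      | nr0 => exact (contra (by omega) h' h.2.1).elim
      | nr1 => exact (contra (by omega) h' h.2.1).elim
      | tri k' => exact (h.2.2.2.2.1 ⟨h'.2.2.2.2.1, h'.2.2.2.2.2⟩).elim
      | rec0 k' => exact congrArg StopTag.rec0 (h.2.2.1.symm.trans h'.2.2.1)
      | rec1 k' => exfalso; have a := h.2.2.2.1; have b := h'.2.2.2.1; omega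
      | nest k' => exact (h'.2.2.2.2.2.1 h.2.2.2.2.2).elim
      | last k' => exact (contra (by omega) h'.2.1 h.2.1).elim
    | rec1 k =>
      cases t' with
      | nr0 => exact (contra (by omega) h' h.2.1).elim
      | nr1 => exact (contra (by omega) h' h.2.1).elim
      | tri k' => exact (h.2.2.2.2.1 ⟨h'.2.2.2.2.1, h'.2.2.2.2.2⟩).elim
      | rec0 k' => exfalso; have a := h.2.2.2.1; have b := h'.2.2.2.1; omega
      | rec1 k' => exact congrArg StopTag.rec1 (h.2.2.1.symm.trans h'.2.2.1)
      | nest k' => exact (h'.2.2.2.2.2.1 h.2.2.2.2.2).elim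
      | last k' => exact (contra (by omega) h'.2.1 h.2.1).elim
    | nest k =>
      cases t' with
      | nr0 => exact (contra (by omega) h' h.2.1).elim
      | nr1 => exact (contra (by omega) h' h.2.1).elim
      | tri k' => exact (h.2.2.2.2.1 ⟨h'.2.2.2.2.1, h'.2.2.2.2.2⟩).elim
      | rec0 k' => exact (h.2.2.2.2.2.1 h'.2.2.2.2.2).elim
      | rec1 k' => exact (h.2.2.2.2.2.1 h'.2.2.2.2.2).elim
      | nest k' => exact congrArg StopTag.nest (h.2.2.1.symm.trans h'.2.2.1)
      | last k' => exact (contra (by omega) h'.2.1 h.2.1).elim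
    | last k =>
      cases t' with
      | nr0 => exfalso; have a := h'.2.2; have b := h.2.1.2.2; omega
      | nr1 => exfalso; have a := h'.2.2; have b := h.2.1.2.2; omega
      | tri k' => exact (contra (by omega) h.2.1 h'.2.1).elim
      | rec0 k' => exact (contra (by omega) h.2.1 h'.2.1).elim
      | rec1 k' => exact (contra (by omega) h.2.1 h'.2.1).elim
      | nest k' => exact (contra (by omega) h.2.1 h'.2.1).elim
      | last k' => exact congrArg StopTag.last (h.2.1.2.1.symm.trans h'.2.1.2.1)
end
end
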